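/- arXiv:2307.16260 — 7 statements merged into one kernel-verified Lean document; each statement's English description precedes it below -/
import Mathlib

section
/- Let $L$ be a Lie algebra over a field of characteristic $p > 2$. If $c_1, c_2 \in L$ both satisfy $(\operatorname{ad} c_i)^2 = 0$, then $(\operatorname{ad} [c_1, c_2])^2 = 0$; that is, the set of sandwich elements of $L$ is closed under taking Lie brackets. -/
attribute [local instance 100] LieRing.ofAssociativeRing

/-- In characteristic `p > 2`, the set of sandwich elements
(elements `c` with `(ad c)^2 = 0`) is closed under taking Lie brackets. -/
theorem sandwich_bracket {k L : Type*} [Field k] [LieRing L] [LieAlgebra k L]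
    (p : ℕ) [CharP k p] (hp : 2 < p) (c₁ c₂ : L)
    (h₁ : (LieAlgebra.ad k L c₁) ^ 2 = 0) (h₂ : (LieAlgebra.ad k L c₂) ^ 2 = 0) :
    (LieAlgebra.ad k L ⁅c₁, c₂⁆) ^ 2 = 0 := by
  set A := LieAlgebra.ad k L c₁ with hA
  set B := LieAlgebra.ad k L c₂ with hB
  have hA2 : A * A = 0 := by rw [← sq]; exact h₁
  have hB2 : B * B = 0 := by rw [← sq]; exact h₂
  have h2k : (2 : k) ≠ 0 := by
    intro h
    have := (CharP.cast_eq_zero_iff k p 2).mp h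
    have := Nat.le_of_dvd (by norm_num) this
    omega
  -- key lemma: X*X = 0 and ⁅X,⁅X,Y⁆⁆ = 0 imply X*Y*X = 0
  have key : ∀ X Y : Module.End k L, X * X = 0 → ⁅X, ⁅X, Y⁆⁆ = 0 → X * Y * X = 0 := by
    intro X Y hX hXY
    have expand : ⁅X, ⁅X, Y⁆⁆ = X*X*Y - X*Y*X - (X*Y*X) + Y*(X*X) := by
      simp only [Ring.lie_def]; noncomm_ring
    rw [expand, hX, zero_mul, mul_zero, zero_sub, add_zero] at hXY
    have h2 : (2 : k) • (X*Y*X) = 0 := by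
      rw [two_smul, ← neg_eq_zero, neg_add, ← sub_eq_add_neg]
      exact hXY
    exact (smul_eq_zero.mp h2).resolve_left h2k
  have hbr1 : ⁅A, ⁅A, B⁆⁆ = 0 := by
    rw [hA, hB, ← LieHom.map_lie (LieAlgebra.ad k L), ← LieHom.map_lie (LieAlgebra.ad k L)]
    have : ⁅c₁, ⁅c₁, c₂⁆⁆ = (A * A) c₂ := by
      simp [Module.End.mul_apply, LieAlgebra.ad_apply, hA]
    rw [this, hA2]
    simp
  have hbr2 : ⁅B, ⁅B, A⁆⁆ = 0 := by
    rw [hA, hB, ← LieHom.map_lie (LieAlgebra.ad k L), ← LieHom.map_lie (LieAlgebra.ad k L)]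
    have : ⁅c₂, ⁅c₂, c₁⁆⁆ = (B * B) c₁ := by
      simp [Module.End.mul_apply, LieAlgebra.ad_apply, hB]
    rw [this, hB2]
    simp
  have hABA : A * B * A = 0 := key A B hA2 hbr1
  have hBAB : B * A * B = 0 := key B A hB2 hbr2
  have hbrac : LieAlgebra.ad k L ⁅c₁, c₂⁆ = A * B - B * A := by
    rw [LieHom.map_lie, Ring.lie_def, hA, hB]
  rw [hbrac, sq]
  have : (A*B - B*A) * (A*B - B*A)
      = (A*B*A)*B - A*(B*B)*A - B*(A*A)*B + (B*A*B)*A := by noncomm_ring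
  rw [this, hABA, hBAB, hA2, hB2]
  noncomm_ring
end

section
/- Let $\mathcal{L}$ be a finite dimensional restricted Lie algebra over an algebraically closed field of characteristic $p > 0$, and let $V$ be a finite dimensional faithful restricted $\mathcal{L}$-module with representation $\rho: \mathcal{L} \to \mathfrak{gl}(V)$ such that $\mathfrak{gl}(V) = \rho(\mathcal{L}) \oplus R$ for some subspace $R$ with $[\rho(\mathcal{L}), R] \subseteq R$. Then for any nilpotent element $e \in \mathcal{L}$ there exists a semisimple element $h \in \mathcal{L}$ such that $[h, e] = e$. -/
section AuxTrace
open LinearMap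

section Trace
attribute [local instance 100] LieRing.ofAssociativeRing
variable {k V : Type*} [Field k] [AddCommGroup V] [Module k V] [FiniteDimensional k V]

lemma trace_pair_inj (C : Module.End k V)
    (h : ∀ Y : Module.End k V, LinearMap.trace k V (C * Y) = 0) : C = 0 := by
  by_contra hC
  obtain ⟨v, hv⟩ : ∃ v, C v ≠ 0 := by
    by_contra h'; push_neg at h'; exact hC (LinearMap.ext h')
  obtain ⟨φ, hφ⟩ : ∃ φ : Module.Dual k V, φ (C v) ≠ 0 := by
    by_contra h'; push_neg at h'
    exact hv ((Module.forall_dual_apply_eq_zero_iff k (C v)).mp h')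
  apply hφ
  have hcomp : C * dualTensorHom k V V (φ ⊗ₜ v) = dualTensorHom k V V (φ ⊗ₜ (C v)) := by
    ext x; simp [Module.End.mul_apply, dualTensorHom_apply]
  have := h (dualTensorHom k V V (φ ⊗ₜ v))
  rwa [hcomp, trace_eq_contract_apply, contractLeft_apply] at this

/-- the trace pairing as a bilinear map -/
noncomputable def tracePair : Module.End k V →ₗ[k] Module.Dual k (Module.End k V) :=
  LinearMap.mk₂ k (fun C Y => LinearMap.trace k V (C * Y))
    (fun C C' Y => by simp [add_mul]) (fun t C Y => by simp [smul_mul_assoc])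
    (fun C Y Y' => by simp [mul_add]) (fun t C Y => by simp [mul_smul_comm])

lemma tracePair_apply (C Y : Module.End k V) :
    tracePair C Y = LinearMap.trace k V (C * Y) := rfl

lemma tracePair_surjective :
    Function.Surjective (tracePair : Module.End k V → Module.Dual k (Module.End k V)) := by
  have hinj : Function.Injective (tracePair : Module.End k V →ₗ[k] _) := by
    rw [← LinearMap.ker_eq_bot, eq_bot_iff]
    intro C hC
    simp only [LinearMap.mem_ker] at hC
    have : C = 0 := trace_pair_inj C (fun Y => by
      have := LinearMap.congr_fun hC Y
      simpa [tracePair_apply] using this)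
    simp [this]
  exact (LinearMap.injective_iff_surjective_of_finrank_eq_finrank
    (Subspace.dual_finrank_eq).symm).mp hinj

/-- For nilpotent `N` there is `D` with `⁅D, N⁆ = N`. -/
lemma exists_grading (N : Module.End k V) (hN : IsNilpotent N) :
    ∃ D : Module.End k V, ⁅D, N⁆ = N := by
  set W : Submodule k (Module.End k V) := LinearMap.range (LieAlgebra.ad k (Module.End k V) N)
  have hmem : N ∈ W := by
    rw [← (Subspace.forall_mem_dualAnnihilator_apply_eq_zero_iff W N)]
    intro φ hφ
    obtain ⟨C, rfl⟩ := tracePair_surjective φ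
    rw [Submodule.mem_dualAnnihilator] at hφ
    have hz : C * N - N * C = 0 := by
      apply trace_pair_inj
      intro Y
      have h1 : LinearMap.trace k V (C * (N * Y)) - LinearMap.trace k V (C * (Y * N)) = 0 := by
        simpa [tracePair_apply, Ring.lie_def, mul_sub] using hφ _ ⟨Y, rfl⟩
      calc LinearMap.trace k V ((C * N - N * C) * Y)
          = LinearMap.trace k V (C * (N * Y)) - LinearMap.trace k V (N * (C * Y)) := by
            rw [sub_mul, map_sub, mul_assoc, mul_assoc]
        _ = LinearMap.trace k V (C * (N * Y)) - LinearMap.trace k V (C * (Y * N)) := by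
            rw [LinearMap.trace_mul_comm k N (C * Y), mul_assoc]
        _ = 0 := h1
    have hc : Commute C N := sub_eq_zero.mp hz
    have hnil : IsNilpotent (C * N) := hc.isNilpotent_mul_left hN
    have := LinearMap.isNilpotent_trace_of_isNilpotent hnil
    simpa [tracePair_apply, isNilpotent_iff_eq_zero] using this
  obtain ⟨D, hD⟩ := hmem
  refine ⟨-D, ?_⟩
  have : ⁅N, D⁆ = N := hD
  rw [neg_lie, ← lie_skew, neg_neg, this]

end Trace
end AuxTrace


/-- A `[p]`-structure (restricted Lie algebra structure) on a Lie algebra `L`: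
a `p`-operation `pow` such that `ad (pow x) = (ad x)^p`, `pow (t • x) = t^p • pow x`,
and `pow (x + y) - pow x - pow y` lies in the Lie subalgebra generated by `x` and `y`
(as guaranteed by Jacobson's formula). -/
structure PStruct (k L : Type*) [Field k] [LieRing L] [LieAlgebra k L] (p : ℕ) where
  pow : L → L
  ad_pow : ∀ x : L, LieAlgebra.ad k L (pow x) = (LieAlgebra.ad k L x) ^ p
  pow_smul : ∀ (t : k) (x : L), pow (t • x) = t ^ p • pow x
  pow_add_mem : ∀ x y : L, pow (x + y) - pow x - pow y ∈ LieSubalgebra.lieSpan k L {x, y}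

variable {k L : Type*} [Field k] [LieRing L] [LieAlgebra k L] {p : ℕ}

/-- An element is nilpotent if some iterate of the `p`-operation kills it. -/
def PStruct.IsNil (P : PStruct k L p) (x : L) : Prop := ∃ N : ℕ, P.pow^[N] x = 0

/-- An element is semisimple if it lies in the span of its iterated `p`-th powers
`x^{[p]^i}`, `i ≥ 1`. -/
def PStruct.IsSs (P : PStruct k L p) (x : L) : Prop :=
  x ∈ Submodule.span k (Set.range fun i : ℕ => P.pow^[i + 1] x)

attribute [local instance 100] LieRing.ofAssociativeRing

/-- If a finite dimensional restricted Lie algebra `L` over an algebraically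
closed field of characteristic `p > 0` has a faithful restricted module `V` with
`gl(V) = ρ(L) ⊕ R` and `[ρ(L), R] ⊆ R`, then for every nilpotent `e ∈ L` there is a
semisimple `h ∈ L` with `[h, e] = e`. -/
theorem exists_semisimple_of_richardson
    [IsAlgClosed k] [CharP k p] (hp : 0 < p) [FiniteDimensional k L]
    (P : PStruct k L p)
    (V : Type*) [AddCommGroup V] [Module k V] [FiniteDimensional k V]
    (ρ : L →ₗ⁅k⁆ Module.End k V)
    (hfaith : Function.Injective ρ)
    (hres : ∀ x : L, ρ (P.pow x) = (ρ x) ^ p)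
    (R : Submodule k (Module.End k V))
    (hcompl : IsCompl (LieHom.range ρ).toSubmodule R)
    (hinv : ∀ x : L, ∀ r ∈ R, ⁅ρ x, r⁆ ∈ R)
    (e : L) (he : P.IsNil e) :
    ∃ h : L, P.IsSs h ∧ ⁅h, e⁆ = e := by
  classical
  -- Step 1: ρ e is nilpotent
  have hiter : ∀ (m : ℕ) (x : L), ρ (P.pow^[m] x) = (ρ x) ^ (p ^ m) := by
    intro m
    induction m with
    | zero => intro x; simp
    | succ m ih =>
      intro x
      rw [Function.iterate_succ_apply, ih (P.pow x), hres, ← pow_mul, ← pow_succ']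
  obtain ⟨n, hn⟩ := he
  have hNnil : IsNilpotent (ρ e) := ⟨p ^ n, by rw [← hiter n e, hn, map_zero ρ]⟩
  -- Step 2: some D with ⁅D, ρ e⁆ = ρ e
  obtain ⟨D, hD⟩ := exists_grading (ρ e) hNnil
  -- Step 3: project D to ρ(L) along R
  have hDmem : D ∈ (LieHom.range ρ).toSubmodule ⊔ R := by
    rw [hcompl.sup_eq_top]; trivial
  obtain ⟨s, hs, r, hr, hsr⟩ := Submodule.mem_sup.mp hDmem
  have hs' : s ∈ LieHom.range ρ := hs
  obtain ⟨h', hh'⟩ := hs'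
  have hh2 : ρ h' = s := hh'
  have key : ⁅h', e⁆ = e := by
    have h1 : ρ (⁅h', e⁆ - e) = ⁅ρ e, r⁆ := by
      have h2 : ⁅ρ h' + r, ρ e⁆ = ρ e := by rw [hh2, hsr]; exact hD
      rw [add_lie] at h2
      have h3 : ⁅ρ h', ρ e⁆ = ρ e - ⁅r, ρ e⁆ := eq_sub_of_add_eq h2
      rw [map_sub ρ, ρ.map_lie, h3, ← lie_skew (ρ e) r]
      abel
    have hmemR : ρ (⁅h', e⁆ - e) ∈ R := h1 ▸ hinv e r hr
    have hmemS : ρ (⁅h', e⁆ - e) ∈ (LieHom.range ρ).toSubmodule := ⟨⁅h', e⁆ - e, rfl⟩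
    have hz : ρ (⁅h', e⁆ - e) = 0 :=
      Submodule.disjoint_def.mp hcompl.disjoint _ hmemS hmemR
    have : (⁅h', e⁆ - e) = 0 := hfaith (by rw [hz, map_zero ρ])
    rwa [sub_eq_zero] at this
  -- Step 4: all iterated p-powers of h' still satisfy the bracket relation
  have hfix : ∀ i : ℕ, ⁅P.pow^[i] h', e⁆ = e := by
    intro i
    induction i with
    | zero => exact key
    | succ i ih =>
      rw [Function.iterate_succ_apply']
      have had := P.ad_pow (P.pow^[i] h')
      have hade : LieAlgebra.ad k L (P.pow^[i] h') e = e := by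
        rw [LieAlgebra.ad_apply]; exact ih
      calc ⁅P.pow (P.pow^[i] h'), e⁆
          = (LieAlgebra.ad k L (P.pow (P.pow^[i] h'))) e := (LieAlgebra.ad_apply ..).symm
        _ = ((LieAlgebra.ad k L (P.pow^[i] h')) ^ p) e := by rw [had]
        _ = e := by
            rw [Module.End.pow_apply]
            exact Function.iterate_fixed hade p
  -- Step 5: stabilization of spans of iterated p-powers
  set W : ℕ → Submodule k L :=
    fun m => Submodule.span k (Set.range fun i : ℕ => P.pow^[i + m] h') with hW
  have hWle : ∀ m, W (m + 1) ≤ W m := by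
    intro m
    apply Submodule.span_le.mpr
    rintro _ ⟨i, rfl⟩
    refine Submodule.subset_span ⟨i + 1, ?_⟩
    show P.pow^[i + 1 + m] h' = P.pow^[i + (m + 1)] h'
    rw [show i + 1 + m = i + (m + 1) from by omega]
  have hstab : ∃ m, W m ≤ W (m + 1) := by
    by_contra hcon
    push_neg at hcon
    have hlt : ∀ m, Module.finrank k (W (m + 1)) < Module.finrank k (W m) := fun m =>
      Submodule.finrank_lt_finrank_of_lt
        (lt_of_le_of_ne (hWle m) (fun h => hcon m (le_of_eq h.symm)))
    have hbound : ∀ m, Module.finrank k (W m) + m ≤ Module.finrank k (W 0) := by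
      intro m
      induction m with
      | zero => simp
      | succ m ih => have := hlt m; omega
    have := hbound (Module.finrank k (W 0) + 1)
    omega
  obtain ⟨m, hm⟩ := hstab
  refine ⟨P.pow^[m] h', ?_, hfix m⟩
  have hmem0 : P.pow^[m] h' ∈ W m := Submodule.subset_span ⟨0, by simp⟩
  have hfun : (fun i : ℕ => P.pow^[i + (m + 1)] h')
      = (fun i : ℕ => P.pow^[i + 1] (P.pow^[m] h')) := by
    funext i
    rw [← Function.iterate_add_apply, show i + 1 + m = i + (m + 1) from by omega]
  have : W (m + 1) = Submodule.span k (Set.range fun i : ℕ => P.pow^[i + 1] (P.pow^[m] h')) := by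
    simp only [hW]
    rw [hfun]
  have hgoal : P.pow^[m] h' ∈ Submodule.span k
      (Set.range fun i : ℕ => P.pow^[i + 1] (P.pow^[m] h')) := this ▸ hm hmem0
  exact hgoal
end

section
/- Let $\mathcal{L}$ be a finite dimensional restricted Lie algebra over an algebraically closed field of characteristic $p > 2$, embedded as a restricted subalgebra $\mathcal{L} \subseteq \mathfrak{gl}(V)$ with $\mathfrak{gl}(V) = \mathcal{L} \oplus R$ for some subspace $R$ satisfying $[\mathcal{L}, R] \subseteq R$. Then every nilpotent element $e \in \mathcal{L}$ lies in the subspace $[e, [e, \mathcal{L}]]$. -/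
attribute [local instance 100] LieRing.ofAssociativeRing

open Module

universe u

section aux

variable {k : Type*} [Field k]

section V1
variable {V : Type*} [AddCommGroup V] [Module k V]


/-- Triangularity: if `e^n = 0` and `φ (e^(n-1) v) ≠ 0`, and a combination
`∑ a i • e^i v` is killed by all `φ ∘ e^m`, `m < n`, then `a = 0`. -/
lemma triangular_aux (e : Module.End k V) (v : V) (n : ℕ) (hn : e ^ n = 0)
    (φ : Module.Dual k V) (hφ : φ ((e ^ (n - 1)) v) ≠ 0)
    (a : Fin n → k) (h : ∀ m < n, φ ((e ^ m) (∑ i : Fin n, a i • (e ^ (i : ℕ)) v)) = 0) :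
    a = 0 := by
  have key : ∀ i : ℕ, ∀ hi : i < n, a ⟨i, hi⟩ = 0 := by
    intro i
    induction i using Nat.strong_induction_on with
    | _ i ih =>
      intro hi
      have h0 := h (n - 1 - i) (by omega)
      rw [map_sum, map_sum] at h0
      have hterm : ∀ j : Fin n, φ ((e ^ (n - 1 - i)) (a j • (e ^ (j : ℕ)) v))
          = a j * φ ((e ^ (n - 1 - i + (j : ℕ))) v) := by
        intro j
        rw [map_smul, map_smul, smul_eq_mul, ← Module.End.mul_apply, ← pow_add]
      have hsingle : ∑ j : Fin n, φ ((e ^ (n - 1 - i)) (a j • (e ^ (j : ℕ)) v))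
          = a ⟨i, hi⟩ * φ ((e ^ (n - 1)) v) := by
        rw [Finset.sum_eq_single_of_mem (⟨i, hi⟩ : Fin n) (Finset.mem_univ _)]
        · rw [hterm]
          have he : n - 1 - i + i = n - 1 := by omega
          rw [he]
        · intro j _ hj
          rw [hterm]
          rcases lt_or_gt_of_ne (fun hc : (j : ℕ) = i => hj (by ext; exact hc)) with hlt | hgt
          · have := ih (j : ℕ) hlt j.isLt
            simp only [Fin.eta] at this
            rw [this, zero_mul]
          · have hge : n ≤ n - 1 - i + (j : ℕ) := by omega
            rw [pow_eq_zero_of_le hge hn]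
            simp
      rw [hsingle] at h0
      exact (mul_eq_zero.mp h0).resolve_right hφ
  funext j
  have := key (j : ℕ) j.isLt
  simpa using this

end V1
section U1
variable {U : Type*} [AddCommGroup U] [Module k U]


/-- On a single Jordan block (cyclic nilpotent module) we can solve `⁅e,⁅e,x⁆⁆ = e`. -/
lemma block_solution (h2 : (2 : k) ≠ 0) (n : ℕ) (eU : Module.End k U)
    (b : Basis (Fin n) k U)
    (heb : ∀ i : Fin n, eU (b i) = if h : (i : ℕ) + 1 < n then b ⟨(i : ℕ) + 1, h⟩ else 0) :
    ∃ x : Module.End k U, ⁅eU, ⁅eU, x⁆⁆ = eU := by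
  classical
  set B : ℕ → U := fun i => if h : i < n then b ⟨i, h⟩ else 0 with hB
  have heB : ∀ i : ℕ, eU (B i) = B (i + 1) := by
    intro i
    by_cases hi : i < n
    · rw [hB]; simp only [hi, dif_pos]
      rw [heb ⟨i, hi⟩]
    · have hi1 : ¬ i + 1 < n := by omega
      rw [hB]; simp [hi, hi1]
  set C : ℕ → k := fun i => ((i : k) ^ 2 - (n : k) * (i : k)) / 2 with hC
  have hC0 : C 0 = 0 := by simp [hC]
  have hCn : C n = 0 := by rw [hC]; simp [pow_two]
  set x : Module.End k U := b.constr k (fun i : Fin n => C (i : ℕ) • B ((i : ℕ) - 1)) with hx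
  have hxB : ∀ i : ℕ, x (B i) = C i • B (i - 1) := by
    intro i
    by_cases hi : i < n
    · rw [hB]; simp only [hi, dif_pos]
      exact b.constr_basis k _ ⟨i, hi⟩
    · have hBi : B i = 0 := by rw [hB]; simp [hi]
      rw [hBi, map_zero]
      by_cases hin : i = n
      · subst hin; rw [hCn, zero_smul]
      · have : ¬ i - 1 < n := by omega
        rw [hB]; simp [this]
  have hA : ∀ i : ℕ, ⁅eU, x⁆ (B i) = (C i - C (i + 1)) • B i := by
    intro i
    rw [Ring.lie_def]
    simp only [LinearMap.sub_apply, Module.End.mul_apply]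
    rw [hxB, heB, hxB, map_smul, heB]
    rcases Nat.eq_zero_or_pos i with h0 | hpos
    · subst h0; rw [hC0]; simp
    · have : i - 1 + 1 = i := by omega
      rw [this, Nat.add_sub_cancel, sub_smul]
  have hkey : ∀ i : ℕ, C i - 2 * C (i + 1) + C (i + 2) = 1 := by
    intro i
    rw [hC]
    push_cast
    field_simp
    ring
  have hfinal : ∀ i : ℕ, ⁅eU, ⁅eU, x⁆⁆ (B i) = eU (B i) := by
    intro i
    rw [Ring.lie_def]
    simp only [LinearMap.sub_apply, Module.End.mul_apply]
    rw [hA, heB, hA, map_smul, heB, ← sub_smul]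
    have : C i - C (i + 1) - (C (i + 1) - C (i + 1 + 1)) = 1 := by
      have := hkey i
      have h12 : i + 1 + 1 = i + 2 := by omega
      rw [h12]
      linear_combination hkey i
    rw [this, one_smul]
  refine ⟨x, b.ext fun i => ?_⟩
  have hBi : B (i : ℕ) = b i := by rw [hB]; simp [i.isLt]
  rw [← hBi]
  exact hfinal (i : ℕ)

end U1




set_option synthInstance.maxHeartbeats 1000000 in
set_option maxHeartbeats 1000000 in
lemma exists_double_bracket_aux (h2 : (2 : k) ≠ 0) :
    ∀ (d : ℕ) (V : Type u) [AddCommGroup V] [Module k V] [FiniteDimensional k V],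
      finrank k V ≤ d → ∀ e : Module.End k V, IsNilpotent e →
        ∃ x : Module.End k V, ⁅e, ⁅e, x⁆⁆ = e := by
  intro d
  induction d with
  | zero =>
    intro V _ _ _ hd e _
    have : Subsingleton V := finrank_zero_iff.mp (Nat.le_zero.mp hd)
    exact ⟨0, Subsingleton.elim _ _⟩
  | succ d ih =>
    intro V _ _ _ hd e he
    rcases subsingleton_or_nontrivial V with hss | hnt
    · exact ⟨0, Subsingleton.elim _ _⟩
    classical
    -- nilpotency index
    have hex : ∃ m : ℕ, e ^ m = 0 := he
    set n := Nat.find hex with hndef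
    have hn : e ^ n = 0 := Nat.find_spec hex
    have npos : 0 < n := by
      rcases Nat.eq_zero_or_pos n with h0 | h
      · exfalso
        have := hn
        rw [h0, pow_zero] at this
        exact one_ne_zero (α := Module.End k V) this
      · exact h
    have hn1 : e ^ (n - 1) ≠ 0 := Nat.find_min hex (by omega)
    obtain ⟨v, hv⟩ : ∃ v : V, (e ^ (n - 1)) v ≠ 0 := by
      by_contra hc
      push_neg at hc
      exact hn1 (LinearMap.ext fun w => by simpa using hc w)
    obtain ⟨φ, hφ⟩ : ∃ φ : Module.Dual k V, φ ((e ^ (n - 1)) v) ≠ 0 := by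
      by_contra hc
      push_neg at hc
      exact hv ((forall_dual_apply_eq_zero_iff k _).mp hc)
    -- the Jordan block span
    have hli : LinearIndependent k (fun i : Fin n => (e ^ (i : ℕ)) v) := by
      rw [Fintype.linearIndependent_iff]
      intro g hg
      have hzero : ∀ m < n, φ ((e ^ m) (∑ i : Fin n, g i • (e ^ (i : ℕ)) v)) = 0 := by
        intro m _
        rw [hg, map_zero, map_zero]
      have := triangular_aux e v n hn φ hφ g hzero
      intro i
      rw [this]
      rfl
    set U : Submodule k V := Submodule.span k (Set.range fun i : Fin n => (e ^ (i : ℕ)) v)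
      with hUdef
    set b : Basis (Fin n) k U := Module.Basis.span hli with hbdef
    have hbv : ∀ i : Fin n, (b i : V) = (e ^ (i : ℕ)) v := fun i => congrArg Subtype.val (Module.Basis.span_apply hli i)
    have hvpow_succ : ∀ m : ℕ, e ((e ^ m) v) = (e ^ (m + 1)) v := by
      intro m
      rw [← Module.End.mul_apply, ← pow_succ']
    have hU : ∀ u ∈ U, e u ∈ U := by
      intro u hu
      induction hu using Submodule.span_induction with
      | mem x hx =>
        obtain ⟨i, rfl⟩ := hx
        rw [hvpow_succ]
        by_cases h : (i : ℕ) + 1 < n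
        · exact Submodule.subset_span ⟨⟨(i : ℕ) + 1, h⟩, rfl⟩
        · have hin : (i : ℕ) + 1 = n := by omega
          rw [hin, hn]
          simp
      | zero => simp
      | add x y _ _ hx hy => rw [map_add]; exact Submodule.add_mem _ hx hy
      | smul a x _ hx => rw [map_smul]; exact Submodule.smul_mem _ _ hx
    set eU : Module.End k U := e.restrict hU with heUdef
    have heb : ∀ i : Fin n,
        eU (b i) = if h : (i : ℕ) + 1 < n then b ⟨(i : ℕ) + 1, h⟩ else 0 := by
      intro i
      by_cases h : (i : ℕ) + 1 < n
      · rw [dif_pos h]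
        apply Subtype.ext
        rw [LinearMap.restrict_coe_apply, hbv, hbv, hvpow_succ]
      · rw [dif_neg h]
        apply Subtype.ext
        rw [LinearMap.restrict_coe_apply, hbv, hvpow_succ]
        have hin : (i : ℕ) + 1 = n := by omega
        rw [hin, hn]
        rfl
    -- the complement
    set Φ : V →ₗ[k] (Fin n → k) := LinearMap.pi (fun i : Fin n => φ ∘ₗ (e ^ (i : ℕ))) with hΦdef
    have hΦapp : ∀ (w : V) (i : Fin n), Φ w i = φ ((e ^ (i : ℕ)) w) := by
      intro w i; rfl
    set W : Submodule k V := LinearMap.ker Φ with hWdef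
    have hWmem : ∀ w : V, w ∈ W ↔ ∀ i : Fin n, φ ((e ^ (i : ℕ)) w) = 0 := by
      intro w
      rw [hWdef, LinearMap.mem_ker, funext_iff]
      exact forall_congr' fun i => by rw [hΦapp]; rfl
    have hW : ∀ w ∈ W, e w ∈ W := by
      intro w hw
      rw [hWmem] at hw ⊢
      intro i
      have hsw : (e ^ (i : ℕ)) (e w) = (e ^ ((i : ℕ) + 1)) w := by
        rw [← Module.End.mul_apply, ← pow_succ]
      rw [hsw]
      by_cases h : (i : ℕ) + 1 < n
      · exact hw ⟨(i : ℕ) + 1, h⟩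
      · have hin : (i : ℕ) + 1 = n := by omega
        rw [hin, hn]
        simp
    have hinj : ∀ u ∈ U, (∀ i : Fin n, φ ((e ^ (i : ℕ)) u) = 0) → u = 0 := by
      intro u hu hker
      rw [hUdef, Submodule.mem_span_range_iff_exists_fun] at hu
      obtain ⟨a, ha⟩ := hu
      have h0 : ∀ m < n, φ ((e ^ m) (∑ i : Fin n, a i • (e ^ (i : ℕ)) v)) = 0 := by
        intro m hm
        rw [ha]
        exact hker ⟨m, hm⟩
      have haz := triangular_aux e v n hn φ hφ a h0
      rw [← ha, haz]
      simp
    have hdisj : Disjoint U W := by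
      rw [Submodule.disjoint_def]
      intro u hu huW
      exact hinj u hu fun i => (hWmem u).mp huW i
    have hcod : Codisjoint U W := by
      have hinj' : Function.Injective (Φ.comp U.subtype) := by
        rw [← LinearMap.ker_eq_bot, Submodule.eq_bot_iff]
        rintro ⟨u, hu⟩ hmem
        rw [LinearMap.mem_ker] at hmem
        apply Subtype.ext
        show u = 0
        refine hinj u hu fun i => ?_
        have := congrFun (congrArg (fun f => f) hmem) i
        simpa [hΦapp] using congrFun (show Φ u = 0 from hmem) i
      have hfr : finrank k U = finrank k (Fin n → k) := by
        rw [finrank_eq_card_basis b, Module.finrank_pi]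
      have hsurj : Function.Surjective (Φ.comp U.subtype) :=
        (LinearMap.injective_iff_surjective_of_finrank_eq_finrank hfr).mp hinj'
      rw [codisjoint_iff, eq_top_iff]
      intro z _
      obtain ⟨u, hu⟩ := hsurj (Φ z)
      have hzW : z - ↑u ∈ W := by
        rw [hWdef, LinearMap.mem_ker, map_sub]
        rw [show Φ ↑u = Φ.comp U.subtype u from rfl, hu, sub_self]
      exact Submodule.mem_sup.mpr ⟨↑u, u.2, z - ↑u, hzW, by abel⟩
    have hcompl : IsCompl U W := ⟨hdisj, hcod⟩
    -- solve on the block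
    obtain ⟨xU, hxU⟩ := block_solution h2 n eU b heb
    -- solve on the complement by induction
    set eW : Module.End k W := e.restrict hW with heWdef
    have heWnil : IsNilpotent eW := by
      refine ⟨n, ?_⟩
      rw [heWdef, Module.End.pow_restrict]
      ext w
      simp [LinearMap.restrict_apply, hn]
    have hWrank : finrank k W ≤ d := by
      have hsum := Submodule.finrank_add_eq_of_isCompl hcompl
      have hUrank : finrank k U = n := by rw [finrank_eq_card_basis b, Fintype.card_fin]
      omega
    obtain ⟨xW, hxW⟩ := ih W hWrank eW heWnil
    -- combine
    set ρ : (U × W) ≃ₗ[k] V := Submodule.prodEquivOfIsCompl U W hcompl with hρdef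
    have hlieconj : ∀ f g : Module.End k (U × W), ρ.conj ⁅f, g⁆ = ⁅ρ.conj f, ρ.conj g⁆ := by
      intro f g
      rw [Ring.lie_def, Ring.lie_def, map_sub, Module.End.mul_eq_comp, Module.End.mul_eq_comp,
        Module.End.mul_eq_comp, Module.End.mul_eq_comp, LinearEquiv.conj_comp,
        LinearEquiv.conj_comp]
    have hprodbracket : ∀ (f g : Module.End k U) (f' g' : Module.End k W),
        LinearMap.prodMap ⁅f, g⁆ ⁅f', g'⁆ = ⁅f.prodMap f', g.prodMap g'⁆ := by
      intro f g f' g'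
      apply LinearMap.ext
      rintro ⟨a, c⟩
      simp [Ring.lie_def, LinearMap.prodMap_apply, LinearMap.sub_apply, Module.End.mul_apply]
    have hconjapp : ∀ p : U × W, ρ ((eU.prodMap eW) p) = e (ρ p) := by
      rintro ⟨a, c⟩
      rw [Submodule.coe_prodEquivOfIsCompl', Submodule.coe_prodEquivOfIsCompl']
      simp only [LinearMap.prodMap_apply, Prod.fst, Prod.snd]
      rw [map_add]
      rw [heUdef, heWdef]
      rw [LinearMap.restrict_coe_apply, LinearMap.restrict_coe_apply]
    have heconj : ρ.conj (eU.prodMap eW) = e := by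
      apply LinearMap.ext
      intro z
      rw [LinearEquiv.conj_apply_apply, hconjapp, ρ.apply_symm_apply]
    refine ⟨ρ.conj (xU.prodMap xW), ?_⟩
    calc ⁅e, ⁅e, ρ.conj (xU.prodMap xW)⁆⁆
        = ρ.conj ⁅eU.prodMap eW, ⁅eU.prodMap eW, xU.prodMap xW⁆⁆ := by
          rw [hlieconj, hlieconj, heconj]
      _ = ρ.conj ((⁅eU, ⁅eU, xU⁆⁆).prodMap ⁅eW, ⁅eW, xW⁆⁆) := by
          rw [hprodbracket, hprodbracket]
      _ = e := by rw [hxU, hxW, heconj]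

end aux

/-- Let `L ⊆ gl(V)` be a restricted Lie subalgebra (i.e. closed under the
`p`-th power of endomorphisms) over an algebraically closed field of characteristic
`p > 2`, with `gl(V) = L ⊕ R` for a subspace `R` satisfying `[L, R] ⊆ R`. Then every
nilpotent `e ∈ L` lies in `[e, [e, L]]`. -/
theorem nilpotent_mem_double_bracket {k : Type*} [Field k] [IsAlgClosed k]
    {p : ℕ} [CharP k p] (hp : 2 < p)
    (V : Type*) [AddCommGroup V] [Module k V] [FiniteDimensional k V]
    (L : LieSubalgebra k (Module.End k V))
    (hrestricted : ∀ x ∈ L, x ^ p ∈ L)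
    (R : Submodule k (Module.End k V))
    (hcompl : IsCompl L.toSubmodule R)
    (hinv : ∀ x ∈ L, ∀ r ∈ R, ⁅x, r⁆ ∈ R)
    (e : Module.End k V) (heL : e ∈ L) (he : ∃ N : ℕ, e ^ (p ^ N) = 0) :
    ∃ x ∈ L, e = ⁅e, ⁅e, x⁆⁆ := by
  have h2 : (2 : k) ≠ 0 := by
    intro hc
    have h20 : ((2 : ℕ) : k) = 0 := by exact_mod_cast hc
    have hdvd : p ∣ 2 := (CharP.cast_eq_zero_iff k p 2).mp h20
    have := Nat.le_of_dvd (by norm_num) hdvd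
    omega
  have hnil : IsNilpotent e := by
    obtain ⟨N, hN⟩ := he
    exact ⟨p ^ N, hN⟩
  obtain ⟨x₀, hx₀⟩ :=
    exists_double_bracket_aux h2 (finrank k V) V le_rfl e hnil
  obtain ⟨a, r, haL, hrR, har⟩ :=
    Submodule.codisjoint_iff_exists_add_eq.mp hcompl.codisjoint x₀
  have hsplit : ⁅e, ⁅e, x₀⁆⁆ = ⁅e, ⁅e, a⁆⁆ + ⁅e, ⁅e, r⁆⁆ := by
    rw [← har, lie_add, lie_add]
  have haL' : a ∈ L := haL
  have hA : ⁅e, ⁅e, a⁆⁆ ∈ L.toSubmodule := L.lie_mem heL (L.lie_mem heL haL')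
  have hB : ⁅e, ⁅e, r⁆⁆ ∈ R := hinv e heL _ (hinv e heL r hrR)
  have hsum : e = ⁅e, ⁅e, a⁆⁆ + ⁅e, ⁅e, r⁆⁆ := by
    rw [← hsplit]; exact hx₀.symm
  have hdiff : e - ⁅e, ⁅e, a⁆⁆ = ⁅e, ⁅e, r⁆⁆ := sub_eq_iff_eq_add'.mpr hsum
  have hmemL : e - ⁅e, ⁅e, a⁆⁆ ∈ L.toSubmodule := Submodule.sub_mem _ heL hA
  have hzero : e - ⁅e, ⁅e, a⁆⁆ = 0 := by
    have := hcompl.disjoint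
    rw [Submodule.disjoint_def] at this
    exact this _ hmemL (hdiff ▸ hB)
  exact ⟨a, haL', by rw [← sub_eq_zero]; exact hzero⟩
end

section
/- Let $\mathcal{L}$ be a finite dimensional restricted Lie algebra over an algebraically closed field of characteristic $p > 2$ possessing a Richardson module $V$, let $\t$ be a toral subalgebra of $\mathcal{L}$, and let $\mathcal{L}_0 = \mathfrak{c}_{\mathcal{L}}(\t)$ be its centralizer. Then the center $\mathfrak{z}(\mathcal{L}_0)$ contains no nonzero nilpotent elements, i.e., $\mathfrak{z}(\mathcal{L}_0)$ is a toral subalgebra. -/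
open LinearMap

lemma trace_smulRight'' {k V : Type*} [Field k] [AddCommGroup V] [Module k V]
    [FiniteDimensional k V] (f : Module.Dual k V) (v : V) :
    LinearMap.trace k V (f.smulRight v) = f v := by
  have h : f.smulRight v = dualTensorHom k V V (f ⊗ₜ v) := by
    ext w; simp [dualTensorHom_apply]
  rw [h, LinearMap.trace_eq_contract_apply, contractLeft_apply]

/-- For a nilpotent endomorphism `e` there is `h` with `[h,e] = e`. -/
lemma exists_brk_eq_self {k V : Type*} [Field k] [AddCommGroup V] [Module k V]
    [FiniteDimensional k V] (e : Module.End k V) (he : IsNilpotent e) :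
    ∃ h : Module.End k V, h * e - e * h = e := by
  classical
  set adE : Module.End k V →ₗ[k] Module.End k V :=
    LinearMap.mul k (Module.End k V) e - (LinearMap.mul k (Module.End k V)).flip e with hadE
  have adE_apply : ∀ m : Module.End k V, adE m = e * m - m * e := by
    intro m; simp [hadE, LinearMap.mul_apply']
  set C : Submodule k (Module.End k V) := LinearMap.ker adE with hC
  have memC : ∀ y : Module.End k V, y ∈ C ↔ e * y = y * e := by
    intro y
    rw [hC, LinearMap.mem_ker, adE_apply, sub_eq_zero]
  -- the trace pairing
  set φ : Module.End k V →ₗ[k] Module.Dual k (Module.End k V) :=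
    (LinearMap.mul k (Module.End k V)).compr₂ (LinearMap.trace k V) with hφ
  have φ_apply : ∀ z b : Module.End k V, φ z b = LinearMap.trace k V (z * b) := by
    intro z b; simp [hφ, LinearMap.mul_apply']
  have hφinj : Function.Injective φ := by
    rw [← LinearMap.ker_eq_bot, Submodule.eq_bot_iff]
    intro z hz
    by_contra hz0
    obtain ⟨v, hv⟩ : ∃ v, z v ≠ 0 := by
      by_contra hall
      push_neg at hall
      exact hz0 (LinearMap.ext hall)
    obtain ⟨f, hf⟩ : ∃ f : Module.Dual k V, f (z v) ≠ 0 := by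
      by_contra hall
      push_neg at hall
      exact hv ((Module.forall_dual_apply_eq_zero_iff k (z v)).mp hall)
    have h1 : φ z (f.smulRight v) = f (z v) := by
      rw [φ_apply]
      have h2 : z * f.smulRight v = f.smulRight (z v) := by
        ext w; simp [Module.End.mul_apply, LinearMap.smulRight_apply, map_smul]
      rw [h2, trace_smulRight'']
    rw [LinearMap.mem_ker] at hz
    rw [hz] at h1
    exact hf (by simpa using h1.symm)
  have hφsurj : Function.Surjective φ :=
    (LinearMap.injective_iff_surjective_of_finrank_eq_finrank
      (Subspace.dual_finrank_eq).symm).mp hφinj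
  set Φ : Module.End k V →ₗ[k] Module.Dual k C := C.dualRestrict.comp φ with hΦ
  have Φ_apply : ∀ (z : Module.End k V) (y : C),
      Φ z y = LinearMap.trace k V (z * (y : Module.End k V)) := by
    intro z y; simp [hΦ, Submodule.dualRestrict_apply, φ_apply]
  have hΦsurj : Function.Surjective Φ :=
    (Subspace.dualRestrict_surjective).comp hφsurj
  have hrank1 : Module.finrank k (LinearMap.ker Φ) + Module.finrank k C
      = Module.finrank k (Module.End k V) := by
    have h3 := LinearMap.finrank_range_add_finrank_ker Φ
    rw [LinearMap.range_eq_top.mpr hΦsurj] at h3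
    rw [← h3, finrank_top, Subspace.dual_finrank_eq, add_comm]
  have hrank2 : Module.finrank k (LinearMap.range adE) + Module.finrank k C
      = Module.finrank k (Module.End k V) := LinearMap.finrank_range_add_finrank_ker adE
  have hle : LinearMap.range adE ≤ LinearMap.ker Φ := by
    rintro _ ⟨a, rfl⟩
    rw [LinearMap.mem_ker]
    ext y
    rw [LinearMap.zero_apply, Φ_apply, adE_apply]
    have hy : e * (y : Module.End k V) = (y : Module.End k V) * e := (memC _).mp y.2
    have h2 : (e * a - a * e) * (y : Module.End k V)
        = e * (a * y) - (a * (y : Module.End k V)) * e := by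
      rw [sub_mul, mul_assoc, mul_assoc, hy, ← mul_assoc, ← mul_assoc]
    rw [h2, map_sub, LinearMap.trace_mul_comm k (a * (y : Module.End k V)) e, ← mul_assoc,
      sub_self]
  have heq : LinearMap.range adE = LinearMap.ker Φ :=
    Submodule.eq_of_le_of_finrank_le hle (by omega)
  have he_mem : e ∈ LinearMap.ker Φ := by
    rw [LinearMap.mem_ker]
    ext y
    rw [LinearMap.zero_apply, Φ_apply]
    have hy : e * (y : Module.End k V) = (y : Module.End k V) * e := (memC _).mp y.2
    have hnil : IsNilpotent (e * (y : Module.End k V)) := Commute.isNilpotent_mul_right hy he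
    have h4 := LinearMap.isNilpotent_trace_of_isNilpotent hnil
    simpa using h4.eq_zero
  rw [← heq] at he_mem
  obtain ⟨a, ha⟩ := he_mem
  rw [adE_apply] at ha
  refine ⟨-a, ?_⟩
  have h5 : (-a) * e - e * (-a) = e * a - a * e := by noncomm_ring
  rw [h5, ha]

section rel
variable {k W : Type*} [Field k] [AddCommGroup W] [Module k W] {p : ℕ}

lemma ker_sq_of_rel (hp : 2 ≤ p) {A : Module.End k W} (c : ℕ →₀ k)
    (hc : (c.sum fun i a => a • A ^ p ^ (i + 1)) = A) {v : W} (hv : A (A v) = 0) :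
    A v = 0 := by
  have hterm : ∀ i : ℕ, (A ^ p ^ (i + 1)) v = 0 := by
    intro i
    have h2 : 2 ≤ p ^ (i + 1) := le_trans hp (Nat.le_self_pow (by omega) p)
    have h3 : A ^ p ^ (i + 1) = A ^ (p ^ (i + 1) - 2) * (A * A) := by
      rw [← pow_two, ← pow_add]
      congr 1
      omega
    rw [h3, Module.End.mul_apply, Module.End.mul_apply, hv, map_zero]
  conv_lhs => rw [← hc]
  rw [Finsupp.sum]
  simp [hterm]

lemma eigen_of_rel [Fact p.Prime] (hchar : CharP (Module.End k W) p)
    {A : Module.End k W} (c : ℕ →₀ k)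
    (hc : (c.sum fun i a => a • A ^ p ^ (i + 1)) = A)
    (μ : k) (m : ℕ) {v : W} (hv : ((A - μ • 1) ^ m) v = 0) : A v = μ • v := by
  haveI := hchar
  have core : ∀ w : W, (A - μ • 1) ((A - μ • 1) w) = 0 → (A - μ • 1) w = 0 := by
    intro w hw
    by_cases hw0 : w = 0
    · simp [hw0]
    have hpow : ∀ i : ℕ, (A ^ p ^ (i + 1)) w = μ ^ p ^ (i + 1) • w := by
      intro i
      have hcomm : Commute (A - μ • 1) ((μ : k) • (1 : Module.End k W)) :=
        (Commute.one_right (A - μ • 1)).smul_right μ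
      have hA : (A - μ • 1) + μ • 1 = A := by abel
      have h2 : 2 ≤ p ^ (i + 1) :=
        le_trans (Fact.out (p := p.Prime)).two_le (Nat.le_self_pow (by omega) p)
      have h3 : ((A - μ • 1) ^ (p ^ (i + 1))) w = 0 := by
        have h4 : (A - μ • 1) ^ p ^ (i + 1)
            = (A - μ • 1) ^ (p ^ (i + 1) - 2) * ((A - μ • 1) * (A - μ • 1)) := by
          rw [← pow_two, ← pow_add]
          congr 1
          omega
        rw [h4, Module.End.mul_apply, Module.End.mul_apply, hw, map_zero]
      calc (A ^ p ^ (i + 1)) w = (((A - μ • 1) + μ • 1) ^ p ^ (i + 1)) w := by rw [hA]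
        _ = ((A - μ • 1) ^ p ^ (i + 1) + (μ • 1 : Module.End k W) ^ p ^ (i + 1)) w := by
            rw [add_pow_char_pow_of_commute p (i+1) hcomm]
        _ = μ ^ p ^ (i + 1) • w := by
            rw [LinearMap.add_apply, h3, zero_add, smul_pow, one_pow, LinearMap.smul_apply,
              Module.End.one_apply]
    have hAw : A w = (c.sum fun i a => a * μ ^ p ^ (i + 1)) • w := by
      conv_lhs => rw [← hc]
      rw [Finsupp.sum, Finsupp.sum]
      simp only [LinearMap.coe_sum, Finset.sum_apply, LinearMap.smul_apply, hpow]
      rw [Finset.sum_smul]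
      simp [mul_smul]
    set ν := c.sum fun i a => a * μ ^ p ^ (i + 1) with hν
    have hNw : (A - μ • 1) w = (ν - μ) • w := by
      rw [LinearMap.sub_apply, LinearMap.smul_apply, Module.End.one_apply, hAw, sub_smul]
    have hzero : ((ν - μ) * (ν - μ)) • w = 0 := by
      rw [mul_smul, ← hNw, ← map_smul, ← hNw, hw]
    rcases smul_eq_zero.mp hzero with h | h
    · have : ν = μ := sub_eq_zero.mp (mul_self_eq_zero.mp h)
      rw [hNw, this, sub_self, zero_smul]
    · exact absurd h hw0
  have hind : ∀ (n : ℕ) (w : W), ((A - μ • 1) ^ n) w = 0 → (A - μ • 1) w = 0 := by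
    intro n
    induction n with
    | zero => intro w hw; simp only [pow_zero, Module.End.one_apply] at hw; simp [hw]
    | succ n ih =>
      intro w hw
      rw [pow_succ, Module.End.mul_apply] at hw
      exact core w (ih _ hw)
  have h := hind m v hv
  rw [LinearMap.sub_apply, LinearMap.smul_apply, Module.End.one_apply, sub_eq_zero] at h
  exact h

end rel

section adOp
variable {k A : Type*} [Field k] [Ring A] [Algebra k A]

/-- The inner derivation `m ↦ a*m - m*a` as a linear map in `a`. -/
noncomputable def adOp : A →ₗ[k] Module.End k A := LinearMap.mul k A - (LinearMap.mul k A).flip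

lemma adOp_apply (a m : A) : adOp (k := k) a m = a * m - m * a := by
  simp [adOp, LinearMap.mul_apply']

lemma adOp_eq (a : A) :
    adOp (k := k) a = LinearMap.mulLeft k a - LinearMap.mulRight k a := by
  ext m
  simp [adOp_apply, LinearMap.mulLeft_apply, LinearMap.mulRight_apply]

lemma commute_mulLeft {a b : A} (h : Commute a b) :
    Commute (LinearMap.mulLeft k a) (LinearMap.mulLeft k b) := by
  unfold Commute SemiconjBy
  rw [Module.End.mul_eq_comp, Module.End.mul_eq_comp, ← LinearMap.mulLeft_mul,
    ← LinearMap.mulLeft_mul, h.eq]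

lemma commute_mulRight {a b : A} (h : Commute a b) :
    Commute (LinearMap.mulRight k a) (LinearMap.mulRight k b) := by
  unfold Commute SemiconjBy
  rw [Module.End.mul_eq_comp, Module.End.mul_eq_comp, ← LinearMap.mulRight_mul,
    ← LinearMap.mulRight_mul, h.eq]

lemma commute_adOp {a b : A} (h : Commute a b) :
    Commute (adOp (k := k) a) (adOp (k := k) b) := by
  rw [adOp_eq, adOp_eq]
  have h1 : Commute (LinearMap.mulLeft k a) (LinearMap.mulLeft k b) := commute_mulLeft h
  have h2 : Commute (LinearMap.mulLeft k a) (LinearMap.mulRight k b) :=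
    LinearMap.commute_mulLeft_right a b
  have h3 : Commute (LinearMap.mulRight k a) (LinearMap.mulLeft k b) :=
    (LinearMap.commute_mulLeft_right b a).symm
  have h4 : Commute (LinearMap.mulRight k a) (LinearMap.mulRight k b) := commute_mulRight h
  exact (h1.sub_right h2).sub_left (h3.sub_right h4)

lemma adOp_pow_char_pow {p : ℕ} [Fact p.Prime] (hchar : CharP (Module.End k A) p)
    (a : A) (n : ℕ) :
    (adOp (k := k) a) ^ p ^ n = adOp (k := k) (a ^ p ^ n) := by
  haveI := hchar
  rw [adOp_eq, adOp_eq, sub_pow_char_pow_of_commute p n (LinearMap.commute_mulLeft_right a a),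
    LinearMap.pow_mulLeft, LinearMap.pow_mulRight]

end adOp

lemma exists_proj {k M : Type*} [Field k] [AddCommGroup M] [Module k M] [FiniteDimensional k M] :
    ∀ T : List (Module.End k M),
      (∀ B ∈ T, ∀ m, B (B m) = 0 → B m = 0) →
      (∀ B ∈ T, ∀ B' ∈ T, Commute B B') →
      ∃ π : Module.End k M,
        (∀ B ∈ T, ∀ m, B (π m) = 0) ∧
        (∀ m, (∀ B ∈ T, B m = 0) → π m = m) ∧
        (∀ U : Module.End k M, (∀ B ∈ T, Commute B U) → Commute π U) := by
  intro T
  induction T with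
  | nil =>
    intro _ _
    exact ⟨1, by simp, by simp, fun U _ => Commute.one_left U⟩
  | cons B₀ rest ih =>
    intro hsq hcomm
    obtain ⟨πr, hr1, hr2, hr3⟩ := ih
      (fun B hB => hsq B (List.mem_cons_of_mem _ hB))
      (fun B hB B' hB' => hcomm B (List.mem_cons_of_mem _ hB) B' (List.mem_cons_of_mem _ hB'))
    have hB₀sq := hsq B₀ (List.mem_cons_self)
    have hdisj : Disjoint (LinearMap.ker B₀) (LinearMap.range B₀) := by
      rw [Submodule.disjoint_def]
      rintro m hk ⟨w, rfl⟩
      exact hB₀sq w (LinearMap.mem_ker.mp hk)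
    have hcompl : IsCompl (LinearMap.ker B₀) (LinearMap.range B₀) := by
      refine ⟨hdisj, ?_⟩
      rw [codisjoint_iff]
      apply Submodule.eq_top_of_finrank_eq
      have h1 := Submodule.finrank_sup_add_finrank_inf_eq (LinearMap.ker B₀) (LinearMap.range B₀)
      rw [disjoint_iff.mp hdisj] at h1
      simp only [finrank_bot, add_zero] at h1
      have h2 := LinearMap.finrank_range_add_finrank_ker B₀
      omega
    set π₀ : Module.End k M :=
      (LinearMap.ker B₀).subtype.comp (Submodule.projectionOnto _ _ hcompl) with hπ₀
    have hπ₀mem : ∀ m, π₀ m ∈ LinearMap.ker B₀ := fun m => by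
      simp only [hπ₀, LinearMap.comp_apply, Submodule.subtype_apply]
      exact Submodule.coe_mem _
    have hπ₀left : ∀ m ∈ LinearMap.ker B₀, π₀ m = m := by
      intro m hm
      simp only [hπ₀, LinearMap.comp_apply, Submodule.subtype_apply]
      have := Submodule.projectionOnto_apply_left hcompl ⟨m, hm⟩
      rw [this]
    have hπ₀right : ∀ m ∈ LinearMap.range B₀, π₀ m = 0 := by
      intro m hm
      simp only [hπ₀, LinearMap.comp_apply, Submodule.subtype_apply]
      rw [Submodule.projectionOnto_apply_of_mem_right hcompl hm]
      rfl
    have hπ₀comm : ∀ U : Module.End k M, Commute B₀ U → Commute π₀ U := by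
      intro U hU
      have key : ∀ m, π₀ (U m) = U (π₀ m) := by
        intro m
        have hm : m ∈ (⊤ : Submodule k M) := trivial
        rw [← codisjoint_iff.mp hcompl.codisjoint] at hm
        obtain ⟨u, hu, w, hw, rfl⟩ := Submodule.mem_sup.mp hm
        have hUu : U u ∈ LinearMap.ker B₀ := by
          rw [LinearMap.mem_ker]
          have : B₀ (U u) = U (B₀ u) := by
            have := hU.eq
            calc B₀ (U u) = (B₀ * U) u := rfl
              _ = (U * B₀) u := by rw [hU.eq]
              _ = U (B₀ u) := rfl
          rw [this, LinearMap.mem_ker.mp hu, map_zero]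
        have hUw : U w ∈ LinearMap.range B₀ := by
          obtain ⟨v, rfl⟩ := hw
          refine ⟨U v, ?_⟩
          calc B₀ (U v) = (B₀ * U) v := rfl
            _ = (U * B₀) v := by rw [hU.eq]
            _ = U (B₀ v) := rfl
        rw [map_add, map_add, map_add]
        rw [hπ₀left _ hUu, hπ₀right _ hUw, hπ₀left _ hu, hπ₀right _ hw]
        simp
      unfold Commute SemiconjBy
      ext m
      simp only [Module.End.mul_apply]
      exact key m
    refine ⟨π₀ * πr, ?_, ?_, ?_⟩
    · intro B hB m
      rcases List.mem_cons.mp hB with rfl | hB'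
      · exact LinearMap.mem_ker.mp (hπ₀mem (πr m))
      · have hc : Commute π₀ B :=
          hπ₀comm B (hcomm B₀ (List.mem_cons_self) B (List.mem_cons_of_mem _ hB'))
        calc B ((π₀ * πr) m) = (B * π₀) (πr m) := rfl
          _ = (π₀ * B) (πr m) := by rw [hc.symm.eq]
          _ = π₀ (B (πr m)) := rfl
          _ = 0 := by rw [hr1 B hB' m, map_zero]
    · intro m hm
      have h1 : πr m = m := hr2 m (fun B hB => hm B (List.mem_cons_of_mem _ hB))
      have h2 : π₀ m = m := hπ₀left m (LinearMap.mem_ker.mpr (hm B₀ (List.mem_cons_self)))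
      calc (π₀ * πr) m = π₀ (πr m) := rfl
        _ = m := by rw [h1, h2]
    · intro U hU
      exact Commute.mul_left (hπ₀comm U (hU B₀ (List.mem_cons_self)))
        (hr3 U (fun B hB => hU B (List.mem_cons_of_mem _ hB)))



variable {k L : Type*} [Field k] [LieRing L] [LieAlgebra k L] {p : ℕ}

attribute [local instance 100] LieRing.ofAssociativeRing

/-- Suppose `L` is a finite dimensional restricted Lie algebra over an
algebraically closed field of characteristic `p > 2` possessing a Richardson module `V`,
`t` is a toral subalgebra, and `L₀ = c_L(t)` is its centraliser. Then the centre of `L₀`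
contains no nonzero nilpotent element of `L` (so it is a toral subalgebra). -/
theorem center_of_centralizer_toral
    [IsAlgClosed k] [CharP k p] (hp : 2 < p) [FiniteDimensional k L]
    (P : PStruct k L p)
    (V : Type*) [AddCommGroup V] [Module k V] [FiniteDimensional k V]
    (ρ : L →ₗ⁅k⁆ Module.End k V)
    (hfaith : Function.Injective ρ)
    (hres : ∀ x : L, ρ (P.pow x) = (ρ x) ^ p)
    (R : Submodule k (Module.End k V))
    (hcompl : IsCompl (LieHom.range ρ).toSubmodule R)
    (hinv : ∀ x : L, ∀ r ∈ R, ⁅ρ x, r⁆ ∈ R)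
    (t : LieSubalgebra k L) (ht_pow : ∀ x ∈ t, P.pow x ∈ t)
    (ht_ss : ∀ x ∈ t, P.IsSs x)
    (x : L)
    (hx₀ : ∀ s ∈ t, ⁅s, x⁆ = 0)
    (hxz : ∀ y : L, (∀ s ∈ t, ⁅s, y⁆ = 0) → ⁅x, y⁆ = 0)
    (hxnil : P.IsNil x) :
    x = 0 := by
  classical
  rcases subsingleton_or_nontrivial (Module.End k V) with hV | hV
  · exact hfaith (Subsingleton.elim _ _)
  have hpp : Fact p.Prime := ⟨(CharP.char_is_prime_or_zero k p).resolve_right (by omega)⟩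
  haveI := hpp
  haveI hchE : CharP (Module.End k V) p := charP_of_injective_algebraMap' k p
  haveI hchEE : CharP (Module.End k (Module.End k V)) p := charP_of_injective_algebraMap' k p
  -- iterated restriction identities
  have hresN : ∀ (N : ℕ) (z : L), ρ (P.pow^[N] z) = (ρ z) ^ p ^ N := by
    intro N
    induction N with
    | zero => intro z; simp
    | succ N ihN =>
      intro z
      rw [Function.iterate_succ_apply, ihN, hres, ← pow_mul, ← pow_succ']
  have hadN : ∀ (N : ℕ) (z : L),
      LieAlgebra.ad k L (P.pow^[N] z) = (LieAlgebra.ad k L z) ^ p ^ N := by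
    intro N
    induction N with
    | zero => intro z; simp
    | succ N ihN =>
      intro z
      rw [Function.iterate_succ_apply, ihN, P.ad_pow, ← pow_mul, ← pow_succ']
  set e := ρ x with he
  obtain ⟨N, hN⟩ := hxnil
  have henil : IsNilpotent e := ⟨p ^ N, by rw [← hresN N x, hN]; exact ρ.map_zero⟩
  -- finsupp relations
  have hrel : ∀ s ∈ t, ∃ c : ℕ →₀ k, (c.sum fun i a => a • P.pow^[i + 1] s) = s :=
    fun s hs => Finsupp.mem_span_range_iff_exists_finsupp.mp (ht_ss s hs)
  have hrelAd : ∀ s ∈ t, ∃ c : ℕ →₀ k,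
      (c.sum fun i a => a • (LieAlgebra.ad k L s) ^ p ^ (i + 1)) = LieAlgebra.ad k L s := by
    intro s hs
    obtain ⟨c, hc⟩ := hrel s hs
    refine ⟨c, ?_⟩
    have h0 : LieAlgebra.ad k L (c.sum fun i a => a • P.pow^[i + 1] s)
        = c.sum fun i a => a • LieAlgebra.ad k L (P.pow^[i + 1] s) := by
      rw [← LieHom.coe_toLinearMap, map_finsuppSum]
      exact Finsupp.sum_congr fun i _ => map_smul _ _ _
    conv_rhs => rw [← hc]
    rw [h0]
    exact Finsupp.sum_congr fun i _ => by rw [hadN]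
  have hrelρ : ∀ s ∈ t, ∃ c : ℕ →₀ k,
      (c.sum fun i a => a • (ρ s) ^ p ^ (i + 1)) = ρ s := by
    intro s hs
    obtain ⟨c, hc⟩ := hrel s hs
    refine ⟨c, ?_⟩
    have h0 : ρ (c.sum fun i a => a • P.pow^[i + 1] s)
        = c.sum fun i a => a • ρ (P.pow^[i + 1] s) := by
      rw [← LieHom.coe_toLinearMap, map_finsuppSum]
      exact Finsupp.sum_congr fun i _ => map_smul _ _ _
    conv_rhs => rw [← hc]
    rw [h0]
    exact Finsupp.sum_congr fun i _ => by rw [hresN]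
  -- t is abelian
  have habel : ∀ s ∈ t, ∀ y ∈ t, ⁅s, y⁆ = (0 : L) := by
    rcases subsingleton_or_nontrivial t.toSubmodule with hts | hts
    · intro s hs y hy
      have h0 : (⟨y, (t.mem_toSubmodule).mpr hy⟩ : t.toSubmodule) = 0 := Subsingleton.elim _ _
      have h1 : y = 0 := congrArg Subtype.val h0
      rw [h1, lie_zero]
    · intro s hs
      haveI : CharP (Module.End k t.toSubmodule) p := charP_of_injective_algebraMap' k p
      set A := LieAlgebra.ad k L s with hA
      have hmapsTo : ∀ z ∈ t.toSubmodule, A z ∈ t.toSubmodule := by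
        intro z hz
        rw [hA, LieAlgebra.ad_apply, t.mem_toSubmodule]
        exact t.lie_mem hs ((t.mem_toSubmodule).mp hz)
      set D : Module.End k t.toSubmodule := A.restrict hmapsTo with hD
      have hDcoe : ∀ (n : ℕ) (z : t.toSubmodule), ((D ^ n) z : L) = (A ^ n) (z : L) := by
        intro n z
        rw [hD, Module.End.pow_restrict, LinearMap.restrict_coe_apply]
      obtain ⟨c, hc⟩ := hrelAd s hs
      have hcD : (c.sum fun i a => a • D ^ p ^ (i + 1)) = D := by
        ext z
        have hlhs : (((c.sum fun i a => a • D ^ p ^ (i + 1))) z : L)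
            = (c.sum fun i a => a • A ^ p ^ (i + 1)) (z : L) := by
          rw [Finsupp.sum, Finsupp.sum, LinearMap.sum_apply, LinearMap.sum_apply]
          rw [Submodule.coe_sum]
          refine Finset.sum_congr rfl (fun i _ => ?_)
          rw [LinearMap.smul_apply, LinearMap.smul_apply, Submodule.coe_smul]
          rw [hDcoe]
        rw [hlhs, hc]
        have := hDcoe 1 z
        simpa [hA] using this.symm
      have hkerle : ∀ μ : k, Module.End.maxGenEigenspace D μ ≤ LinearMap.ker D := by
        intro μ w hw
        rw [Module.End.mem_maxGenEigenspace] at hw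
        obtain ⟨m, hm⟩ := hw
        have hDw : D w = μ • w :=
          eigen_of_rel (inferInstance : CharP (Module.End k t.toSubmodule) p) c hcD μ m hm
        by_cases hμ : μ = 0
        · rw [LinearMap.mem_ker, hDw, hμ, zero_smul]
        · have hcoe : ⁅s, (w : L)⁆ = μ • (w : L) := by
            have h2 := congrArg Subtype.val hDw
            have h3 : ((D ^ 1) w : L) = (A ^ 1) (w : L) := hDcoe 1 w
            simp only [pow_one] at h3
            rw [h3] at h2
            simpa [hA, LieAlgebra.ad_apply] using h2
          have hwt : (w : L) ∈ t := (t.mem_toSubmodule).mp w.2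
          obtain ⟨c', hc'⟩ := hrelAd (↑w) hwt
          have hA's : (LieAlgebra.ad k L (w : L)) ((LieAlgebra.ad k L (w : L)) s) = 0 := by
            rw [LieAlgebra.ad_apply, LieAlgebra.ad_apply]
            have h4 : ⁅(w : L), s⁆ = -(μ • (w : L)) := by
              rw [← lie_skew, hcoe]
            rw [h4]
            simp
          have h5 : (LieAlgebra.ad k L (w : L)) s = 0 :=
            ker_sq_of_rel (by omega : 2 ≤ p) c' hc' hA's
          rw [LieAlgebra.ad_apply] at h5
          have h6 : μ • (w : L) = 0 := by
            rw [← hcoe, ← lie_skew, h5, neg_zero]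
          have h7 : (w : L) = 0 := by
            rcases smul_eq_zero.mp h6 with h | h
            · exact absurd h hμ
            · exact h
          have h8 : w = 0 := Subtype.val_injective h7
          rw [LinearMap.mem_ker, h8, map_zero]
      have hDzero : ∀ w : t.toSubmodule, D w = 0 := by
        intro w
        have h9 : w ∈ (⊤ : Submodule k t.toSubmodule) := trivial
        rw [← Module.End.iSup_maxGenEigenspace_eq_top D] at h9
        have h10 : (⨆ μ, Module.End.maxGenEigenspace D μ) ≤ LinearMap.ker D :=
          iSup_le hkerle
        exact LinearMap.mem_ker.mp (h10 h9)
      intro y hy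
      have h11 := hDzero ⟨y, (t.mem_toSubmodule).mpr hy⟩
      have h12 := congrArg Subtype.val h11
      have h13 : ((D ^ 1) ⟨y, (t.mem_toSubmodule).mpr hy⟩ : L) = (A ^ 1) (y : L) :=
        hDcoe 1 ⟨y, (t.mem_toSubmodule).mpr hy⟩
      simp only [pow_one] at h13
      rw [h13] at h12
      simpa [hA, LieAlgebra.ad_apply] using h12
  -- the operators T_s on End V
  set Ts : L → Module.End k (Module.End k V) := fun s => adOp (k := k) (ρ s) with hTs
  have hcommρ : ∀ s ∈ t, ∀ s' ∈ t, Commute (ρ s) (ρ s') := by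
    intro s hs s' hs'
    have h1 : ρ ⁅s, s'⁆ = 0 := by rw [habel s hs s' hs']; exact ρ.map_zero
    rw [LieHom.map_lie, Ring.lie_def, sub_eq_zero] at h1
    exact h1
  have hcommT : ∀ s ∈ t, ∀ s' ∈ t, Commute (Ts s) (Ts s') := by
    intro s hs s' hs'
    exact commute_adOp (hcommρ s hs s' hs')
  have hsqT : ∀ s ∈ t, ∀ m : Module.End k V, Ts s (Ts s m) = 0 → Ts s m = 0 := by
    intro s hs
    obtain ⟨c, hcρ⟩ := hrelρ s hs
    have hcT : (c.sum fun i a => a • (Ts s) ^ p ^ (i + 1)) = Ts s := by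
      conv_rhs => rw [hTs]
      show _ = adOp (k := k) (ρ s)
      conv_rhs => rw [← hcρ]
      rw [map_finsuppSum]
      refine Finsupp.sum_congr (fun i _ => ?_)
      rw [map_smul, ← adOp_pow_char_pow hchEE]
    intro m hm
    exact ker_sq_of_rel (by omega : 2 ≤ p) c hcT hm
  -- commutation of e with the T's
  have hTe : ∀ s ∈ t, Ts s e = 0 := by
    intro s hs
    show adOp (k := k) (ρ s) e = 0
    rw [adOp_apply, he, ← Ring.lie_def, ← LieHom.map_lie, hx₀ s hs]
    exact ρ.map_zero
  have hcommTe : ∀ s ∈ t, Commute (Ts s) (adOp (k := k) e) := by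
    intro s hs
    apply commute_adOp
    have h1 : ρ ⁅s, x⁆ = 0 := by rw [hx₀ s hs]; exact ρ.map_zero
    rw [LieHom.map_lie, Ring.lie_def, sub_eq_zero] at h1
    exact h1
  -- spanning list for t
  obtain ⟨S, hSspan⟩ : ∃ S : Finset L, Submodule.span k (S : Set L) = t.toSubmodule :=
    IsNoetherian.noetherian t.toSubmodule
  have hSmem : ∀ s ∈ S, s ∈ t := by
    intro s hs
    have h1 : s ∈ Submodule.span k (S : Set L) := Submodule.subset_span hs
    rw [hSspan] at h1
    exact (t.mem_toSubmodule).mp h1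
  obtain ⟨π, hπ1, hπ2, hπ3⟩ := exists_proj (S.toList.map Ts)
    (by
      intro B hB
      obtain ⟨s, hsl, rfl⟩ := List.mem_map.mp hB
      exact hsqT s (hSmem s (Finset.mem_toList.mp hsl)))
    (by
      intro B hB B' hB'
      obtain ⟨s, hsl, rfl⟩ := List.mem_map.mp hB
      obtain ⟨s', hsl', rfl⟩ := List.mem_map.mp hB'
      exact hcommT s (hSmem s (Finset.mem_toList.mp hsl)) s' (hSmem s' (Finset.mem_toList.mp hsl')))
  obtain ⟨h₁, hh₁⟩ := exists_brk_eq_self e henil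
  set h2 := π h₁ with hh2
  have hπe : π e = e := by
    refine hπ2 e ?_
    intro B hB
    obtain ⟨s, hsl, rfl⟩ := List.mem_map.mp hB
    exact hTe s (hSmem s (Finset.mem_toList.mp hsl))
  have hadEcomm : Commute π (adOp (k := k) e) := by
    refine hπ3 _ ?_
    intro B hB
    obtain ⟨s, hsl, rfl⟩ := List.mem_map.mp hB
    exact hcommTe s (hSmem s (Finset.mem_toList.mp hsl))
  have hbrk : h2 * e - e * h2 = e := by
    have h5 : adOp (k := k) e h₁ = -e := by
      rw [adOp_apply, ← neg_sub (h₁ * e) (e * h₁), hh₁]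
    have h6 : adOp (k := k) e h2 = -e := by
      calc adOp (k := k) e (π h₁) = (adOp (k := k) e * π) h₁ := rfl
        _ = (π * adOp (k := k) e) h₁ := by rw [hadEcomm.eq]
        _ = π (adOp (k := k) e h₁) := rfl
        _ = -e := by rw [h5, map_neg, hπe]
    rw [adOp_apply] at h6
    rw [← neg_sub (e * h2) (h2 * e), h6, neg_neg]
  -- h2 centralizes ρ(t)
  have hTh2 : ∀ s ∈ t, ρ s * h2 - h2 * ρ s = 0 := by
    have hsub : t.toSubmodule ≤ LinearMap.ker
        (((LinearMap.applyₗ h2).comp (adOp (k := k))).comp ρ.toLinearMap) := by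
      rw [← hSspan, Submodule.span_le]
      intro s hsS
      rw [SetLike.mem_coe, LinearMap.mem_ker]
      have h1 : Ts s (π h₁) = 0 :=
        hπ1 (Ts s) (List.mem_map.mpr ⟨s, Finset.mem_toList.mpr hsS, rfl⟩) h₁
      simpa [hTs, hh2] using h1
    intro s hs
    have h1 := hsub ((t.mem_toSubmodule).mpr hs)
    rw [LinearMap.mem_ker] at h1
    have h2' : adOp (k := k) (ρ s) h2 = 0 := by simpa using h1
    rw [adOp_apply] at h2'
    exact h2'
  -- decompose h2 along ρ(L) ⊕ R
  have hsup : h2 ∈ (LieHom.range ρ).toSubmodule ⊔ R := by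
    rw [codisjoint_iff.mp hcompl.codisjoint]
    trivial
  obtain ⟨a, ha, b, hb, hab⟩ := Submodule.mem_sup.mp hsup
  obtain ⟨y, rfl⟩ : ∃ y, ρ y = a :=
    (LieHom.mem_range ρ a).mp ((LieHom.range ρ).mem_toSubmodule.mp ha)
  have hy0 : ∀ s ∈ t, ⁅s, y⁆ = 0 := by
    intro s hs
    have h7 := hTh2 s hs
    have h8 : ρ ⁅s, y⁆ + (ρ s * b - b * ρ s) = 0 := by
      rw [LieHom.map_lie, Ring.lie_def, ← h7, ← hab]
      noncomm_ring
    have h9 : ρ ⁅s, y⁆ ∈ R := by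
      have h10 : ρ ⁅s, y⁆ = -(ρ s * b - b * ρ s) := eq_neg_of_add_eq_zero_left h8
      rw [h10]
      exact Submodule.neg_mem _ (by simpa [Ring.lie_def] using hinv s b hb)
    have h11 : ρ ⁅s, y⁆ ∈ (LieHom.range ρ).toSubmodule :=
      (LieHom.range ρ).mem_toSubmodule.mpr ((LieHom.mem_range ρ _).mpr ⟨⁅s, y⁆, rfl⟩)
    have h12 : ρ ⁅s, y⁆ = 0 := Submodule.disjoint_def.mp hcompl.disjoint _ h11 h9
    have h13 : ρ ⁅s, y⁆ = ρ 0 := by rw [map_zero]; exact h12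
    exact hfaith h13
  have hxy : ⁅x, y⁆ = 0 := hxz y hy0
  have heR : e ∈ R := by
    have h12 : e = (ρ y * e - e * ρ y) + (b * e - e * b) := by
      conv_lhs => rw [← hbrk, ← hab]
      noncomm_ring
    have h13 : ρ y * e - e * ρ y = 0 := by
      have h14 : ρ ⁅y, x⁆ = 0 := by
        have : ⁅y, x⁆ = -⁅x, y⁆ := (lie_skew y x).symm
        rw [this, hxy, neg_zero]
        exact ρ.map_zero
      rw [LieHom.map_lie, Ring.lie_def, ← he] at h14
      exact h14
    rw [h12, h13, zero_add]
    have h15 : b * e - e * b = -⁅ρ x, b⁆ := by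
      rw [Ring.lie_def, he, neg_sub]
    rw [h15]
    exact Submodule.neg_mem _ (hinv x b hb)
  have heRange : e ∈ (LieHom.range ρ).toSubmodule :=
    (LieHom.range ρ).mem_toSubmodule.mpr ((LieHom.mem_range ρ _).mpr ⟨x, rfl⟩)
  have he0 : e = 0 := Submodule.disjoint_def.mp hcompl.disjoint _ heRange heR
  have he1 : ρ x = ρ 0 := by rw [map_zero, ← he]; exact he0
  exact hfaith he1
end

section
/- Let $\mathcal{L} \subseteq \mathfrak{gl}(V)$ be a Lie subalgebra acting irreducibly on a finite dimensional vector space $V$ over an algebraically closed field, and suppose $\mathcal{L}$ is a direct summand of $\mathfrak{gl}(V)$ as an $\mathcal{L}$-module (under the adjoint action). Then $\dim(\mathcal{L}/[\mathcal{L},\mathcal{L}]) \leq 1$. -/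
attribute [local instance 100] LieRing.ofAssociativeRing

open Module LinearMap Submodule

/-- Schur-type lemma: an endomorphism commuting with an irreducibly-acting set is scalar. -/
theorem aux_schur {k V : Type*} [Field k] [IsAlgClosed k]
    [AddCommGroup V] [Module k V] [FiniteDimensional k V] [Nontrivial V]
    (L : LieSubalgebra k (Module.End k V))
    (hirr : ∀ W : Submodule k V, (∀ x ∈ L, ∀ w ∈ W, x w ∈ W) → W = ⊥ ∨ W = ⊤)
    (c : Module.End k V) (hc : ∀ x ∈ L, c * x = x * c) :
    ∃ a : k, c = a • (1 : Module.End k V) := by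
  obtain ⟨a, ha⟩ := Module.End.exists_eigenvalue c
  refine ⟨a, ?_⟩
  have hW : (c.eigenspace a) = ⊥ ∨ (c.eigenspace a) = ⊤ := by
    apply hirr
    intro x hx w hw
    rw [Module.End.mem_eigenspace_iff] at hw ⊢
    have : c (x w) = x (c w) := by
      have := congrFun (congrArg (⇑) (hc x hx)) w
      simpa using this
    rw [this, hw, map_smul]
  rcases hW with h | h
  · exact absurd h ha
  · ext v
    have hv : v ∈ c.eigenspace a := h ▸ Submodule.mem_top
    rw [Module.End.mem_eigenspace_iff] at hv
    simpa using hv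

/-- Invariant functionals on `gl(V)` are multiples of the trace. -/
theorem aux_invariant_functional {k V : Type*} [Field k] [IsAlgClosed k]
    [AddCommGroup V] [Module k V] [FiniteDimensional k V] [Nontrivial V]
    (L : LieSubalgebra k (Module.End k V))
    (hirr : ∀ W : Submodule k V, (∀ x ∈ L, ∀ w ∈ W, x w ∈ W) → W = ⊥ ∨ W = ⊤)
    (μ : Module.Dual k (Module.End k V))
    (hμ : ∀ x ∈ L, ∀ z : Module.End k V, μ ⁅x, z⁆ = 0) :
    ∃ a : k, μ = a • (LinearMap.trace k V) := by
  classical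
  set E := Module.End k V
  -- the trace pairing
  let φ : E →ₗ[k] Module.Dual k E :=
    (LinearMap.mul k E).compr₂ (LinearMap.trace k V)
  have hφ_apply : ∀ c z : E, φ c z = LinearMap.trace k V (c * z) := fun c z => rfl
  have hφinj : Function.Injective φ := by
    rw [← LinearMap.ker_eq_bot]
    refine (Submodule.eq_bot_iff _).2 fun c hc => ?_
    rw [LinearMap.mem_ker] at hc
    ext v
    rw [LinearMap.zero_apply, ← Module.forall_dual_apply_eq_zero_iff k]
    intro f
    have h1 : c * dualTensorHom k V V (f ⊗ₜ[k] v) = dualTensorHom k V V (f ⊗ₜ[k] (c v)) := by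
      ext m
      change c ((dualTensorHom k V V (f ⊗ₜ[k] v)) m) = f m • c v
      rw [dualTensorHom_apply, map_smul]
    have h2 : φ c (dualTensorHom k V V (f ⊗ₜ[k] v)) = 0 := by rw [hc]; rfl
    rw [hφ_apply, h1, trace_eq_contract_apply, contractLeft_apply] at h2
    exact h2
  have hφsurj : Function.Surjective φ := by
    rw [← (LinearMap.injective_iff_surjective_of_finrank_eq_finrank
      (Subspace.dual_finrank_eq (V := E)).symm)]
    exact hφinj
  obtain ⟨c, hc⟩ := hφsurj μ
  have hcomm : ∀ x ∈ L, c * x = x * c := by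
    intro x hx
    have key : φ (c * x - x * c) = 0 := by
      ext z
      rw [hφ_apply, LinearMap.zero_apply, sub_mul, map_sub]
      have h1 : LinearMap.trace k V (c * x * z) = μ (x * z) := by
        rw [← hc, hφ_apply, mul_assoc]
      have h2 : LinearMap.trace k V (x * c * z) = μ (z * x) := by
        rw [mul_assoc, LinearMap.trace_mul_comm, mul_assoc, ← hφ_apply, hc]
      rw [h1, h2, ← map_sub]
      exact hμ x hx z
    have := hφinj (key.trans (map_zero φ).symm)
    exact sub_eq_zero.mp this
  obtain ⟨a, ha⟩ := aux_schur L hirr c hcomm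
  refine ⟨a, ?_⟩
  have h1 : φ 1 = LinearMap.trace k V := by
    ext z
    rw [hφ_apply, one_mul]
  rw [← hc, ha, map_smul, h1]

/-- If `L ⊆ gl(V)` acts irreducibly on a finite dimensional vector space `V`
over an algebraically closed field and `L` is a direct summand of `gl(V)` as an
`L`-module under the adjoint action, then `dim (L/[L,L]) ≤ 1`. -/
theorem codim_derived_le_one {k V : Type*} [Field k] [IsAlgClosed k]
    [AddCommGroup V] [Module k V] [FiniteDimensional k V] [Nontrivial V]
    (L : LieSubalgebra k (Module.End k V))
    (hirr : ∀ W : Submodule k V, (∀ x ∈ L, ∀ w ∈ W, x w ∈ W) → W = ⊥ ∨ W = ⊤)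
    (R : Submodule k (Module.End k V))
    (hcompl : IsCompl L.toSubmodule R)
    (hinv : ∀ x ∈ L, ∀ r ∈ R, ⁅x, r⁆ ∈ R) :
    Module.finrank k
      (L ⧸ (LieSubmodule.toSubmodule (⁅(⊤ : LieIdeal k L), (⊤ : LieIdeal k L)⁆ : LieIdeal k L))) ≤ 1 := by
  classical
  set E := Module.End k V with hEdef
  set D : Submodule k L :=
    LieSubmodule.toSubmodule (⁅(⊤ : LieIdeal k L), (⊤ : LieIdeal k L)⁆ : LieIdeal k L) with hDdef
  haveI : FiniteDimensional k L := inferInstanceAs (FiniteDimensional k L.toSubmodule)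
  -- projection onto L along R
  let π : E →ₗ[k] L.toSubmodule := Submodule.linearProjOfIsCompl _ _ hcompl
  let T : Module.Dual k (L ⧸ D) →ₗ[k] Module.Dual k E := (D.mkQ ∘ₗ π).dualMap
  have hT_apply : ∀ (l : Module.Dual k (L ⧸ D)) (z : E), T l z = l (D.mkQ (π z)) :=
    fun l z => rfl
  have hTinj : Function.Injective T := by
    intro l₁ l₂ h
    apply LinearMap.ext
    intro q
    obtain ⟨y, rfl⟩ := D.mkQ_surjective q
    have h1 : π (y : E) = y := Submodule.linearProjOfIsCompl_apply_left hcompl y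
    have h2 := congrFun (congrArg (⇑) h) (y : E)
    rw [hT_apply, hT_apply, h1] at h2
    exact h2
  have hrange : LinearMap.range T ≤ Submodule.span k {LinearMap.trace k V} := by
    rintro _ ⟨l, rfl⟩
    have hμ : ∀ x ∈ L, ∀ z : E, T l ⁅x, z⁆ = 0 := by
      intro x hx z
      rw [hT_apply]
      -- decompose z
      have hz : z = (π z : E) + (z - (π z : E)) := by abel
      have hr : (z - (π z : E)) ∈ R := by
        rw [← Submodule.linearProjOfIsCompl_apply_eq_zero_iff hcompl]
        rw [map_sub, Submodule.linearProjOfIsCompl_apply_left hcompl (π z)]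
        exact sub_self _
      have hbrac : ⁅x, z⁆ = ⁅x, (π z : E)⁆ + ⁅x, z - (π z : E)⁆ := by
        rw [← lie_add, ← hz]
      have hmemL : ⁅x, (π z : E)⁆ ∈ L := L.lie_mem hx (π z).2
      have hπ1 : π ⁅x, (π z : E)⁆ = ⟨⁅x, (π z : E)⁆, hmemL⟩ :=
        Submodule.linearProjOfIsCompl_apply_left hcompl ⟨⁅x, (π z : E)⁆, hmemL⟩
      have hπ2 : π ⁅x, z - (π z : E)⁆ = 0 :=
        Submodule.projectionOnto_apply_of_mem_right hcompl (hinv x hx _ hr)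
      have hD : (⟨⁅x, (π z : E)⁆, hmemL⟩ : L) ∈ D := by
        have : (⟨⁅x, (π z : E)⁆, hmemL⟩ : L) = ⁅(⟨x, hx⟩ : L), π z⁆ := rfl
        rw [this]
        exact LieSubmodule.lie_mem_lie (LieSubmodule.mem_top _) (LieSubmodule.mem_top _)
      have h0 : D.mkQ ⟨⁅x, (π z : E)⁆, hmemL⟩ = 0 := (Submodule.Quotient.mk_eq_zero D).2 hD
      rw [hbrac, map_add, hπ1, hπ2, add_zero, h0, map_zero]
    obtain ⟨a, ha⟩ := aux_invariant_functional L hirr (T l) hμ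
    rw [ha]
    exact Submodule.smul_mem _ a (Submodule.mem_span_singleton_self _)
  calc Module.finrank k (L ⧸ D)
      = Module.finrank k (Module.Dual k (L ⧸ D)) := (Subspace.dual_finrank_eq).symm
    _ = Module.finrank k (LinearMap.range T) := (LinearMap.finrank_range_of_inj hTinj).symm
    _ ≤ Module.finrank k (Submodule.span k {LinearMap.trace k V}) :=
        Submodule.finrank_mono hrange
    _ ≤ 1 := by simpa using finrank_span_le_card ({LinearMap.trace k V} : Set (Module.Dual k E))
end

section
/- Let $\mathfrak{g}$ be a finite dimensional Lie algebra with a nondegenerate invariant symmetric bilinear form $b$ that is invariant under all derivations of $\mathfrak{g}$, such that $\operatorname{ad}: \mathfrak{g} \to \operatorname{Der}(\mathfrak{g})$ is an isomorphism. Then every $2$-cocycle $\varphi$ on $\mathfrak{g}$ with values in $\k$ has the form $\varphi(x,y) = b([h,x], y)$ for some $h \in \mathfrak{g}$; in particular, every central extension of $\mathfrak{g}$ by $\k$ is trivial. -/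
/-- Let `g` be a finite dimensional Lie algebra with a nondegenerate
symmetric bilinear form `b` invariant under all derivations, such that all derivations
of `g` are inner and `g` has trivial centre (so `ad : g → Der(g)` is an isomorphism).
Then every `2`-cocycle `φ` on `g` with values in `k` has the form
`φ(x, y) = b([h, x], y)` for some `h ∈ g`. -/
theorem two_cocycle_of_invariant_form {k g : Type*} [Field k]
    [LieRing g] [LieAlgebra k g] [FiniteDimensional k g]
    (b : g →ₗ[k] g →ₗ[k] k)
    (hsymm : ∀ x y : g, b x y = b y x)
    (hnondeg : ∀ x : g, (∀ y : g, b x y = 0) → x = 0)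
    (hder : ∀ D : LieDerivation k g g, ∀ x y : g, b (D x) y + b x (D y) = 0)
    (hinner : ∀ D : LieDerivation k g g, ∃ h : g, ∀ x : g, D x = ⁅h, x⁆)
    (hcenter : LieAlgebra.center k g = ⊥) :
    ∀ φ : g →ₗ[k] g →ₗ[k] k,
      (∀ x y : g, φ x y = -φ y x) →
      (∀ x y z : g, φ ⁅x, y⁆ z + φ ⁅y, z⁆ x + φ ⁅z, x⁆ y = 0) →
      ∃ h : g, ∀ x y : g, φ x y = b ⁅h, x⁆ y := by
  intro φ hskew hcocycle
  -- invariance of `b` under inner derivations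
  have hadinv : ∀ a x y : g, b ⁅a, x⁆ y + b x ⁅a, y⁆ = 0 := by
    intro a x y
    have := hder (LieDerivation.ad k g a) x y
    simpa using this
  -- nondegeneracy as `BilinForm.Nondegenerate`
  have hnd : LinearMap.BilinForm.Nondegenerate b := ⟨fun x hx => hnondeg x hx, fun y hy => hnondeg y (fun x => by rw [hsymm]; exact hy x)⟩
  -- `D x` is the unique element with `b (D x) y = φ x y`
  let e := LinearMap.BilinForm.toDual b hnd
  let D : g →ₗ[k] g := e.symm.toLinearMap ∘ₗ φ
  have hD : ∀ x y : g, b (D x) y = φ x y := by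
    intro x y
    have : b (e.symm (φ x)) y = (φ x) y :=
      LinearMap.BilinForm.apply_toDual_symm_apply (hB := hnd) (φ x) y
    simpa [D] using this
  -- `D` is a derivation
  have hleib : ∀ x y : g, D ⁅x, y⁆ = ⁅x, D y⁆ - ⁅y, D x⁆ := by
    intro x y
    rw [← sub_eq_zero]
    apply hnondeg (D ⁅x, y⁆ - (⁅x, D y⁆ - ⁅y, D x⁆))
    intro z
    have h1 : b ⁅x, D y⁆ z = - φ y ⁅x, z⁆ := by
      have := hadinv x (D y) z
      have h2 : b (D y) ⁅x, z⁆ = φ y ⁅x, z⁆ := hD y ⁅x, z⁆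
      linear_combination this - h2
    have h1' : b ⁅y, D x⁆ z = - φ x ⁅y, z⁆ := by
      have := hadinv y (D x) z
      have h2 : b (D x) ⁅y, z⁆ = φ x ⁅y, z⁆ := hD x ⁅y, z⁆
      linear_combination this - h2
    have hc := hcocycle x y z
    have hs1 : φ ⁅y, z⁆ x = - φ x ⁅y, z⁆ := hskew _ _
    have hs2 : φ ⁅z, x⁆ y = - φ y ⁅z, x⁆ := hskew _ _
    have hzx : (⁅z, x⁆ : g) = -⁅x, z⁆ := (lie_skew z x).symm
    have hs3 : φ y ⁅z, x⁆ = - φ y ⁅x, z⁆ := by rw [hzx, map_neg]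
    have hDxy : b (D ⁅x, y⁆) z = φ ⁅x, y⁆ z := hD _ _
    have : b (D ⁅x, y⁆ - (⁅x, D y⁆ - ⁅y, D x⁆)) z
        = b (D ⁅x, y⁆) z - b ⁅x, D y⁆ z + b ⁅y, D x⁆ z := by
      simp [map_sub]; ring
    rw [this, hDxy, h1, h1']
    rw [hs3] at hs2
    linear_combination hc - hs1 - hs2
  let D' : LieDerivation k g g := ⟨D, hleib⟩
  obtain ⟨h, hh⟩ := hinner D'
  refine ⟨h, fun x y => ?_⟩
  have : D x = ⁅h, x⁆ := hh x
  rw [← hD x y, this]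
end

section
/- Every faithful irreducible finite dimensional representation of $\mathfrak{gl}_{kp}$ over an algebraically closed field of characteristic $p > 0$ has dimension divisible by $p$. -/
theorem heis {K : Type*} [Field K] {p : ℕ} [CharP K p] (hp : 0 < p) :
    ∃ U V : Matrix (Fin p) (Fin p) K, U * V - V * U = 1 := by
  refine ⟨Matrix.of (fun i j => if (j : ℕ) = (i : ℕ) + 1 then ((j : ℕ) : K) else 0),
    Matrix.of (fun i j => if (i : ℕ) = (j : ℕ) + 1 then 1 else 0), ?_⟩
  ext i k
  simp only [Matrix.sub_apply, Matrix.mul_apply, Matrix.of_apply, Matrix.one_apply]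
  have h1 : ∀ j : Fin p, (if (j : ℕ) = (i : ℕ) + 1 then ((j : ℕ) : K) else 0) *
      (if (j : ℕ) = (k : ℕ) + 1 then (1:K) else 0)
      = if (j : ℕ) = (i : ℕ) + 1 ∧ (i : ℕ) = (k : ℕ) then ((i : ℕ) + 1 : K) else 0 := by
    intro j
    by_cases hj : (j : ℕ) = (i : ℕ) + 1 <;> by_cases hk : (j : ℕ) = (k : ℕ) + 1
    · have hik : (i : ℕ) = (k : ℕ) := by omega
      rw [if_pos hj, if_pos hk, if_pos ⟨hj, hik⟩, hj]
      push_cast; ring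
    · rw [if_pos hj, if_neg hk, mul_zero, if_neg]
      rintro ⟨h1', h2'⟩; omega
    · rw [if_neg hj, zero_mul, if_neg (by rintro ⟨h, -⟩; exact hj h)]
    · rw [if_neg hj, zero_mul, if_neg (by rintro ⟨h, -⟩; exact hj h)]
  have h2 : ∀ j : Fin p, (if (i : ℕ) = (j : ℕ) + 1 then (1:K) else 0) *
      (if (k : ℕ) = (j : ℕ) + 1 then ((k : ℕ) : K) else 0)
      = if (i : ℕ) = (j : ℕ) + 1 ∧ (i : ℕ) = (k : ℕ) then ((i : ℕ) : K) else 0 := by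
    intro j
    by_cases hj : (i : ℕ) = (j : ℕ) + 1 <;> by_cases hk : (k : ℕ) = (j : ℕ) + 1
    · have hik : (i : ℕ) = (k : ℕ) := by omega
      rw [if_pos hj, if_pos hk, if_pos ⟨hj, hik⟩, hik]
      ring
    · rw [if_pos hj, if_neg hk, mul_zero, if_neg]
      rintro ⟨h1', h2'⟩; omega
    · rw [if_neg hj, zero_mul, if_neg (by rintro ⟨h, -⟩; exact hj h)]
    · rw [if_neg hj, zero_mul, if_neg (by rintro ⟨h, -⟩; exact hj h)]
  rw [Finset.sum_congr rfl (fun j _ => h1 j), Finset.sum_congr rfl (fun j _ => h2 j)]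
  by_cases hik : (i : ℕ) = (k : ℕ)
  swap
  · simp [hik, Fin.ext_iff]
  have hik' : i = k := Fin.ext hik
  have hpK : ((p : ℕ) : K) = 0 := CharP.cast_eq_zero K p
  -- first sum
  have hs1 : (∑ j : Fin p, if (j : ℕ) = (i : ℕ) + 1 ∧ (i : ℕ) = (k : ℕ)
      then ((i : ℕ) + 1 : K) else 0) = if (i : ℕ) + 1 < p then ((i : ℕ) + 1 : K) else 0 := by
    by_cases hb : (i : ℕ) + 1 < p
    · rw [if_pos hb, Finset.sum_eq_single (⟨(i : ℕ) + 1, hb⟩ : Fin p)]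
      · rw [if_pos ⟨rfl, hik⟩]
      · intro b _ hbne
        rw [if_neg]; rintro ⟨h, -⟩; exact hbne (Fin.ext h)
      · intro h; exact absurd (Finset.mem_univ _) h
    · rw [if_neg hb, Finset.sum_eq_zero]
      intro j _
      rw [if_neg]; rintro ⟨h, -⟩; exact absurd j.isLt (by omega)
  have hs2 : (∑ j : Fin p, if (i : ℕ) = (j : ℕ) + 1 ∧ (i : ℕ) = (k : ℕ)
      then ((i : ℕ) : K) else 0) = ((i : ℕ) : K) := by
    by_cases hi0 : (i : ℕ) = 0
    · rw [Finset.sum_eq_zero, hi0, Nat.cast_zero]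
      intro j _
      rw [if_neg]; rintro ⟨h, -⟩; omega
    · obtain ⟨m, hm⟩ := Nat.exists_eq_succ_of_ne_zero hi0
      have hmp : m < p := lt_trans (by omega) i.isLt
      rw [Finset.sum_eq_single (⟨m, hmp⟩ : Fin p)]
      · rw [if_pos ⟨by simp [hm], hik⟩]
      · intro b _ hbne
        rw [if_neg]; rintro ⟨h, -⟩; exact hbne (Fin.ext (show (b : ℕ) = m by omega))
      · intro h; exact absurd (Finset.mem_univ _) h
  rw [hs1, hs2, if_pos hik']
  by_cases hb : (i : ℕ) + 1 < p
  · rw [if_pos hb]; ring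
  · have hip : (i : ℕ) + 1 = p := by omega
    rw [if_neg hb]
    have h0 : ((i : ℕ) : K) + 1 = 0 := by rw [← hip] at hpK; exact_mod_cast hpK
    linear_combination -h0

theorem heis' {K : Type*} [Field K] {p : ℕ} [CharP K p] (hp : 0 < p) (n : ℕ) :
    ∃ U V : Matrix (Fin (n * p)) (Fin (n * p)) K, U * V - V * U = 1 := by
  obtain ⟨U, V, hUV⟩ := heis (K := K) hp
  let e : Fin p × Fin n ≃ Fin (n * p) := (finProdFinEquiv).trans (finCongr (mul_comm p n))
  let f := Matrix.reindexAlgEquiv K K e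
  refine ⟨f (Matrix.blockDiagonal fun _ : Fin n => U),
    f (Matrix.blockDiagonal fun _ : Fin n => V), ?_⟩
  have key : ((Matrix.blockDiagonal fun _ : Fin n => U) * (Matrix.blockDiagonal fun _ : Fin n => V)) -
      ((Matrix.blockDiagonal fun _ : Fin n => V) * (Matrix.blockDiagonal fun _ : Fin n => U)) = 1 := by
    rw [← Matrix.blockDiagonal_mul, ← Matrix.blockDiagonal_mul, ← Matrix.blockDiagonal_sub]
    have h : ((fun _ : Fin n => U * V) - fun _ => V * U) =
        fun _ : Fin n => (1 : Matrix (Fin p) (Fin p) K) := funext fun _ => hUV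
    rw [h]
    exact Matrix.blockDiagonal_one
  rw [← map_mul, ← map_mul, ← map_sub, key, map_one]

attribute [local instance] LieRing.ofAssociativeRing LieAlgebra.ofAssociativeAlgebra

/-- Every faithful irreducible finite dimensional representation of
`gl_{kp}` over an algebraically closed field of characteristic `p > 0` has dimension
divisible by `p`. -/
theorem dim_dvd_of_faithful_irreducible {K : Type*} [Field K] [IsAlgClosed K]
    {p : ℕ} [CharP K p] (hp : 0 < p) (n : ℕ) (hn : 1 ≤ n)
    (V : Type*) [AddCommGroup V] [Module K V] [FiniteDimensional K V] [Nontrivial V]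
    (ρ : Matrix (Fin (n * p)) (Fin (n * p)) K →ₗ⁅K⁆ Module.End K V)
    (hfaith : Function.Injective ρ)
    (hirr : ∀ W : Submodule K V,
      (∀ x : Matrix (Fin (n * p)) (Fin (n * p)) K, ∀ w ∈ W, ρ x w ∈ W) → W = ⊥ ∨ W = ⊤) :
    p ∣ Module.finrank K V := by
  obtain ⟨A, B, hAB⟩ := heis' (K := K) hp n
  set T := ρ 1 with hT
  -- T commutes with everything
  have hcomm : ∀ x, T * ρ x = ρ x * T := by
    intro x
    have h0 : ⁅(1 : Matrix (Fin (n * p)) (Fin (n * p)) K), x⁆ = 0 := by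
      rw [Ring.lie_def]; simp
    have := ρ.map_lie (x := (1 : Matrix (Fin (n * p)) (Fin (n * p)) K)) (y := x)
    rw [h0, map_zero, Ring.lie_def] at this
    exact sub_eq_zero.mp this.symm
  -- eigenvalue of T
  obtain ⟨c, hc⟩ := Module.End.exists_eigenvalue T
  have hW : T.eigenspace c = ⊤ := by
    have hinv : ∀ x : Matrix (Fin (n * p)) (Fin (n * p)) K,
        ∀ w ∈ T.eigenspace c, ρ x w ∈ T.eigenspace c := by
      intro x w hw
      rw [Module.End.mem_eigenspace_iff] at hw ⊢
      calc T (ρ x w) = (T * ρ x) w := rfl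
        _ = (ρ x * T) w := by rw [hcomm]
        _ = ρ x (T w) := rfl
        _ = c • ρ x w := by rw [hw, map_smul]
    rcases hirr (T.eigenspace c) hinv with h | h
    · exact absurd h hc
    · exact h
  have hTv : ∀ v : V, T v = c • v := by
    intro v
    have : v ∈ T.eigenspace c := hW ▸ Submodule.mem_top
    rwa [Module.End.mem_eigenspace_iff] at this
  -- c ≠ 0
  have hc0 : c ≠ 0 := by
    intro h
    have hT0 : T = 0 := by ext v; simp [hTv v, h]
    have h10 : (1 : Matrix (Fin (n * p)) (Fin (n * p)) K) = 0 := by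
      apply hfaith; rw [← hT, hT0, map_zero]
    have hpos : 0 < n * p := Nat.mul_pos hn hp
    have := congrFun (congrFun h10 (⟨0, hpos⟩ : Fin (n * p))) (⟨0, hpos⟩ : Fin (n * p))
    rw [Matrix.one_apply_eq] at this
    exact one_ne_zero (α := K) (by simpa using this)
  -- trace of T is zero
  have htr0 : LinearMap.trace K V T = 0 := by
    have h1 : (1 : Matrix (Fin (n * p)) (Fin (n * p)) K) = ⁅A, B⁆ := by
      rw [Ring.lie_def, hAB]
    rw [hT, h1, ρ.map_lie, Ring.lie_def, map_sub, LinearMap.trace_mul_comm, sub_self]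
  -- trace of T is c * finrank
  have hTid : T = c • (LinearMap.id : V →ₗ[K] V) := by
    ext v; simp [hTv v]
  rw [hTid, map_smul, LinearMap.trace_id, smul_eq_mul] at htr0
  have : ((Module.finrank K V : ℕ) : K) = 0 := by
    rcases mul_eq_zero.mp htr0 with h | h
    · exact absurd h hc0
    · exact h
  exact (CharP.cast_eq_zero_iff K p _).mp this
end
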